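/- arXiv:1507.04976 — 5 statements merged into one kernel-verified Lean document; each statement's English description precedes it below -/
import Mathlib

section
/- Let n ≥ 2 and let x_1, x_2, …, x_n be elements of a commutative ℚ-algebra (e.g. rational polynomial variables). Then r_{[n]}(x_1,…,x_n) = 2^{n−1}·r_{[n]}(x_1/2,…,x_n/2) + Σ_S r_S(x)·r_{[n]∖S}(x), where the sum runs over all subsets S of [n] = {1,…,n} with 1 ∈ S and S ≠ [n]. -/
/-- For a finite set `S = {i_1 < i_2 < … < i_k}` of naturals and values `x`,
`r_S(x) = (x_{i_2} + ⋯ + x_{i_k} - 1)(x_{i_3} + ⋯ + x_{i_k} - 1) ⋯ (x_{i_k} - 1)`,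
i.e. the product over the non-minimal elements `i` of `S` of
`(Σ_{j ∈ S, j ≥ i} x_j) - 1`; in particular `r_S = 1` when `|S| ≤ 1`. -/
def rS {R : Type*} [CommRing R] (S : Finset ℕ) (x : ℕ → R) : R :=
  ∏ i ∈ S.filter fun i => ∃ j ∈ S, j < i, ((∑ j ∈ S.filter fun j => i ≤ j, x j) - 1)

open Finset

def rS2 {R : Type*} [CommRing R] (S : Finset ℕ) (x : ℕ → R) : R :=
  ∏ i ∈ S.filter fun i => ∃ j ∈ S, j < i, ((∑ j ∈ S.filter fun j => i ≤ j, x j) - 2)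

lemma nonmin_filter (S : Finset ℕ) (m : ℕ) (hm : m ∈ S) (hmin : ∀ j ∈ S, m ≤ j) :
    (S.filter fun i => ∃ j ∈ S, j < i) = S.erase m := by
  ext i
  simp only [mem_filter, mem_erase]
  constructor
  · rintro ⟨hi, j, hj, hji⟩
    have := hmin j hj
    exact ⟨by omega, hi⟩
  · rintro ⟨hne, hi⟩
    exact ⟨hi, m, hm, lt_of_le_of_ne (hmin i hi) (Ne.symm hne)⟩

lemma prodAux_insert {R : Type*} [CommRing R] (c : R) (m : ℕ) (T : Finset ℕ)
    (hT : T.Nonempty) (hm : ∀ j ∈ T, m < j) (x : ℕ → R) :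
    (∏ i ∈ (insert m T).filter fun i => ∃ j ∈ insert m T, j < i,
        ((∑ j ∈ (insert m T).filter fun j => i ≤ j, x j) - c)) =
      ((∑ j ∈ T, x j) - c) *
        ∏ i ∈ T.filter fun i => ∃ j ∈ T, j < i,
          ((∑ j ∈ T.filter fun j => i ≤ j, x j) - c) := by
  have hmT : m ∉ T := fun h => lt_irrefl m (hm m h)
  have hle : ∀ j ∈ insert m T, m ≤ j := by
    intro j hj
    rcases mem_insert.1 hj with rfl | hj
    · exact le_refl j
    · exact le_of_lt (hm j hj)
  have h1 : ((insert m T).filter fun i => ∃ j ∈ insert m T, j < i) = T := by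
    rw [nonmin_filter (insert m T) m (mem_insert_self m T) hle, erase_insert hmT]
  rw [h1]
  have h2 : ∀ i ∈ T, ((insert m T).filter fun j => i ≤ j) = T.filter fun j => i ≤ j := by
    intro i hi
    rw [filter_insert, if_neg (by exact not_le.2 (hm i hi))]
  have h3 : (∏ i ∈ T, ((∑ j ∈ (insert m T).filter fun j => i ≤ j, x j) - c)) =
      ∏ i ∈ T, ((∑ j ∈ T.filter fun j => i ≤ j, x j) - c) :=
    Finset.prod_congr rfl fun i hi => by rw [h2 i hi]
  rw [h3]
  -- now peel the min of T
  set m' := T.min' hT with hm'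
  have hm'T : m' ∈ T := T.min'_mem hT
  have h4 : (T.filter fun i => ∃ j ∈ T, j < i) = T.erase m' :=
    nonmin_filter T m' hm'T (fun j hj => T.min'_le j hj)
  rw [h4, ← Finset.mul_prod_erase T _ hm'T]
  congr 2
  rw [Finset.filter_true_of_mem (fun j hj => T.min'_le j hj)]

lemma rS_insert {R : Type*} [CommRing R] (m : ℕ) (T : Finset ℕ)
    (hT : T.Nonempty) (hm : ∀ j ∈ T, m < j) (x : ℕ → R) :
    rS (insert m T) x = ((∑ j ∈ T, x j) - 1) * rS T x :=
  prodAux_insert 1 m T hT hm x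

lemma rS2_insert {R : Type*} [CommRing R] (m : ℕ) (T : Finset ℕ)
    (hT : T.Nonempty) (hm : ∀ j ∈ T, m < j) (x : ℕ → R) :
    rS2 (insert m T) x = ((∑ j ∈ T, x j) - 2) * rS2 T x :=
  prodAux_insert 2 m T hT hm x

lemma rS_singleton {R : Type*} [CommRing R] (m : ℕ) (x : ℕ → R) : rS {m} x = 1 := by
  unfold rS
  rw [Finset.prod_eq_one]
  intro i hi
  simp only [mem_filter, mem_singleton] at hi
  obtain ⟨rfl, j, rfl, h⟩ := hi
  omega

lemma rS2_singleton {R : Type*} [CommRing R] (m : ℕ) (x : ℕ → R) : rS2 {m} x = 1 := by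
  unfold rS2
  rw [Finset.prod_eq_one]
  intro i hi
  simp only [mem_filter, mem_singleton] at hi
  obtain ⟨rfl, j, rfl, h⟩ := hi
  omega

lemma two_mul_half {R : Type*} [CommRing R] [Algebra ℚ R] (s : R) :
    (2 : R) * ((2⁻¹ : ℚ) • s) = s := by
  rw [Algebra.smul_def, ← mul_assoc, show ((2:R) = algebraMap ℚ R 2) by rw [map_ofNat],
    ← map_mul]
  norm_num

lemma rS2_eq_pow_mul {R : Type*} [CommRing R] [Algebra ℚ R] (S : Finset ℕ)
    (hS : S.Nonempty) (x : ℕ → R) :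
    rS2 S x = 2 ^ (S.card - 1) * rS S (fun i => (2⁻¹ : ℚ) • x i) := by
  classical
  set m := S.min' hS with hm
  have hfilter : (S.filter fun i => ∃ j ∈ S, j < i) = S.erase m := by
    ext i
    simp only [mem_filter, mem_erase]
    constructor
    · rintro ⟨hi, j, hj, hji⟩
      have := S.min'_le j hj
      exact ⟨by omega, hi⟩
    · rintro ⟨hne, hi⟩
      exact ⟨hi, m, S.min'_mem hS, lt_of_le_of_ne (S.min'_le i hi) (Ne.symm hne)⟩
  have hcard : (S.erase m).card = S.card - 1 := card_erase_of_mem (S.min'_mem hS)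
  unfold rS rS2
  rw [hfilter, ← hcard, ← Finset.prod_const (2 : R), ← Finset.prod_mul_distrib]
  apply Finset.prod_congr rfl
  intro i _
  rw [← Finset.smul_sum, mul_sub, two_mul_half]
  ring

lemma key {R : Type*} [CommRing R] (x : ℕ → R) (S : Finset ℕ) :
    ∀ m : ℕ, m ∈ S → (∀ j ∈ S, m ≤ j) →
    rS S x = rS2 S x +
      ∑ T ∈ S.powerset.filter fun T => m ∈ T ∧ T ≠ S, rS T x * rS (S \ T) x := by
  induction S using Finset.strongInduction with
  | _ S ih =>
  intro m hmS hmin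
  by_cases hS' : (S.erase m).Nonempty
  case neg =>
    have hSm : S = {m} := by
      apply Finset.eq_singleton_iff_unique_mem.2
      refine ⟨hmS, fun a ha => ?_⟩
      by_contra hne
      exact hS' ⟨a, Finset.mem_erase.2 ⟨hne, ha⟩⟩
    subst hSm
    have hA : ({m} : Finset ℕ).powerset.filter (fun T => m ∈ T ∧ T ≠ {m}) = ∅ := by
      ext T
      simp only [mem_filter, mem_powerset, Finset.subset_singleton_iff, notMem_empty,
        iff_false]
      rintro ⟨rfl | rfl, hmT, hne⟩
      · exact absurd hmT (notMem_empty m)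
      · exact hne rfl
    rw [hA, rS_singleton, rS2_singleton]
    simp
  case pos =>
    set S' := S.erase m with hS'def
    have hmm' : m ∉ S' := notMem_erase m S
    have hins : insert m S' = S := insert_erase hmS
    have hS'sub : S' ⊆ S := erase_subset m S
    have hlt : ∀ j ∈ S', m < j := fun j hj =>
      lt_of_le_of_ne (hmin j (mem_of_mem_erase hj)) (Ne.symm (ne_of_mem_erase hj))
    set m' := S'.min' hS' with hm'def
    have hm'S' : m' ∈ S' := S'.min'_mem hS'
    have hminS' : ∀ j ∈ S', m' ≤ j := fun j hj => S'.min'_le j hj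
    set σ := ∑ j ∈ S', x j with hσ
    -- peel the minimum from rS S and rS2 S
    have e1 : rS S x = (σ - 1) * rS S' x := by
      have := rS_insert m S' hS' hlt x
      rwa [hins] at this
    have e2 : rS2 S x = (σ - 2) * rS2 S' x := by
      have := rS2_insert m S' hS' hlt x
      rwa [hins] at this
    -- reindex the sum over T ∋ m by T ↦ T.erase m
    have hST : ∀ T : Finset ℕ, m ∈ T → S \ T = S' \ T.erase m := by
      intro T hmT
      ext i
      simp only [mem_sdiff, hS'def, mem_erase]
      constructor
      · rintro ⟨hiS, hiT⟩
        exact ⟨⟨fun h => hiT (h ▸ hmT), hiS⟩, fun h => hiT h.2⟩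
      · rintro ⟨⟨hne, hiS⟩, h⟩
        exact ⟨hiS, fun hiT => h ⟨hne, hiT⟩⟩
    have hsum1 : (∑ T ∈ S.powerset.filter fun T => m ∈ T ∧ T ≠ S, rS T x * rS (S \ T) x)
        = ∑ T ∈ S'.powerset.filter fun T => T ≠ S',
            rS (insert m T) x * rS (S' \ T) x := by
      refine Finset.sum_bij' (fun T _ => T.erase m) (fun T _ => insert m T) ?_ ?_ ?_ ?_ ?_
      · intro T hT
        simp only [mem_filter, mem_powerset] at hT ⊢
        obtain ⟨hTS, hmT, hTneS⟩ := hT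
        refine ⟨erase_subset_erase m hTS, fun h => hTneS ?_⟩
        rw [← insert_erase hmT, h, hins]
      · intro T hT
        simp only [mem_filter, mem_powerset] at hT ⊢
        obtain ⟨hTS, hTne⟩ := hT
        refine ⟨insert_subset hmS (hTS.trans hS'sub), mem_insert_self m T, fun h => hTne ?_⟩
        have : m ∉ T := fun hc => hmm' (hTS hc)
        rw [← erase_insert this, h]
      · intro T hT
        simp only [mem_filter, mem_powerset] at hT
        exact insert_erase hT.2.1
      · intro T hT
        simp only [mem_filter, mem_powerset] at hT
        exact erase_insert fun hc => hmm' (hT.1 hc)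
      · intro T hT
        simp only [mem_filter, mem_powerset] at hT
        rw [insert_erase hT.2.1, hST T hT.2.1]
    -- split off T = ∅
    have hempty : (∅ : Finset ℕ) ∈ S'.powerset.filter fun T => T ≠ S' :=
      mem_filter.2 ⟨empty_mem_powerset S', (hS'.ne_empty).symm⟩
    have hsum2 : (∑ T ∈ S'.powerset.filter fun T => T ≠ S',
          rS (insert m T) x * rS (S' \ T) x)
        = rS S' x + ∑ T ∈ (S'.powerset.filter fun T => T ≠ S').erase ∅,
            rS (insert m T) x * rS (S' \ T) x := by
      rw [← Finset.add_sum_erase _ _ hempty]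
      congr 1
      rw [insert_empty_eq, rS_singleton, sdiff_empty, one_mul]
    set C := (S'.powerset.filter fun T => T ≠ S').erase ∅ with hC
    have hCmem : ∀ T ∈ C, T ⊆ S' ∧ T ≠ S' ∧ T ≠ ∅ := by
      intro T hT
      simp only [hC, mem_erase, mem_filter, mem_powerset] at hT
      exact ⟨hT.2.1, hT.2.2, hT.1⟩
    have hsum3 : (∑ T ∈ C, rS (insert m T) x * rS (S' \ T) x)
        = ∑ T ∈ C, ((∑ j ∈ T, x j) - 1) * (rS T x * rS (S' \ T) x) := by
      refine Finset.sum_congr rfl fun T hT => ?_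
      obtain ⟨hTS', _, hTne⟩ := hCmem T hT
      rw [rS_insert m T (nonempty_of_ne_empty hTne) (fun j hj => hlt j (hTS' hj)) x,
        mul_assoc]
    -- split C according to membership of m'
    set D := S'.powerset.filter fun T => m' ∈ T ∧ T ≠ S' with hD
    have hC1 : C.filter (fun T => m' ∈ T) = D := by
      ext T
      simp only [hC, hD, mem_filter, mem_erase, mem_powerset]
      constructor
      · rintro ⟨⟨hne, hsub, hne'⟩, hm'⟩
        exact ⟨hsub, hm', hne'⟩
      · rintro ⟨hsub, hm', hne'⟩
        exact ⟨⟨ne_empty_of_mem hm', hsub, hne'⟩, hm'⟩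
    have hC2 : (∑ T ∈ C.filter fun T => ¬ m' ∈ T,
          ((∑ j ∈ T, x j) - 1) * (rS T x * rS (S' \ T) x))
        = ∑ T ∈ D, ((∑ j ∈ S' \ T, x j) - 1) * (rS T x * rS (S' \ T) x) := by
      refine Finset.sum_bij' (fun T _ => S' \ T) (fun T _ => S' \ T) ?_ ?_ ?_ ?_ ?_
      · intro T hT
        simp only [mem_filter] at hT
        obtain ⟨hTC, hm'T⟩ := hT
        obtain ⟨hTS', hTneS', hTne⟩ := hCmem T hTC
        simp only [hD, mem_filter, mem_powerset]
        refine ⟨sdiff_subset, mem_sdiff.2 ⟨hm'S', hm'T⟩, fun h => ?_⟩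
        obtain ⟨a, ha⟩ := nonempty_of_ne_empty hTne
        have : a ∈ S' \ T := by rw [h]; exact hTS' ha
        exact (mem_sdiff.1 this).2 ha
      · intro T hT
        simp only [hD, mem_filter, mem_powerset] at hT
        obtain ⟨hTS', hm'T, hTne⟩ := hT
        simp only [mem_filter, hC, mem_erase, mem_powerset]
        have h1 : (S' \ T).Nonempty := sdiff_nonempty.2 fun h =>
          hTne (subset_antisymm hTS' h)
        refine ⟨⟨h1.ne_empty, sdiff_subset, fun h => ?_⟩, fun h => (mem_sdiff.1 h).2 hm'T⟩
        have : m' ∈ S' \ T := by rw [h]; exact hm'S'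
        exact (mem_sdiff.1 this).2 hm'T
      · intro T hT
        simp only [mem_filter] at hT
        exact Finset.sdiff_sdiff_eq_self (hCmem T hT.1).1
      · intro T hT
        simp only [hD, mem_filter, mem_powerset] at hT
        exact Finset.sdiff_sdiff_eq_self hT.1
      · intro T hT
        simp only [mem_filter] at hT
        rw [Finset.sdiff_sdiff_eq_self (hCmem T hT.1).1, mul_comm (rS T x)]
    have hsum4 : (∑ T ∈ C, ((∑ j ∈ T, x j) - 1) * (rS T x * rS (S' \ T) x))
        = (σ - 2) * ∑ T ∈ D, rS T x * rS (S' \ T) x := by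
      rw [← Finset.sum_filter_add_sum_filter_not C (fun T => m' ∈ T), hC1, hC2,
        Finset.mul_sum, ← Finset.sum_add_distrib]
      refine Finset.sum_congr rfl fun T hT => ?_
      simp only [hD, mem_filter, mem_powerset] at hT
      have hsplit : (∑ j ∈ S' \ T, x j) + ∑ j ∈ T, x j = σ :=
        Finset.sum_sdiff hT.1
      have : (∑ j ∈ S' \ T, x j) = σ - ∑ j ∈ T, x j := by
        rw [← hsplit]; ring
      rw [this]
      ring
    -- induction hypothesis on S'
    have hIH : rS S' x = rS2 S' x + ∑ T ∈ D, rS T x * rS (S' \ T) x :=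
      ih S' (erase_ssubset hmS) m' hm'S' hminS'
    rw [e1, e2, hsum1, hsum2, hsum3, hsum4]
    linear_combination (σ - 2) * hIH

/-- **Lemma 7**: for `n ≥ 2` and elements `x_1, …, x_n` of a commutative `ℚ`-algebra,
`r_{[n]}(x) = 2^{n-1} r_{[n]}(x/2) + Σ_{1 ∈ S ⊊ [n]} r_S(x) · r_{[n] ∖ S}(x)`,
where `[n] = {1, …, n}`. -/
theorem rS_recurrence {R : Type*} [CommRing R] [Algebra ℚ R] (n : ℕ) (hn : 2 ≤ n)
    (x : ℕ → R) :
    rS (Finset.Icc 1 n) x =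
      2 ^ (n - 1) * rS (Finset.Icc 1 n) (fun i => (2⁻¹ : ℚ) • x i) +
        ∑ S ∈ (Finset.Icc 1 n).powerset.filter fun S => 1 ∈ S ∧ S ≠ Finset.Icc 1 n,
          rS S x * rS (Finset.Icc 1 n \ S) x := by
  have h1 : (1:ℕ) ∈ Finset.Icc 1 n := Finset.mem_Icc.2 ⟨le_refl 1, by omega⟩
  have hmin : ∀ j ∈ Finset.Icc 1 n, 1 ≤ j := fun j hj => (Finset.mem_Icc.1 hj).1
  have hne : (Finset.Icc 1 n).Nonempty := ⟨1, h1⟩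
  have hcard : (Finset.Icc 1 n).card = n := by
    rw [Nat.card_Icc]; omega
  have := key x (Finset.Icc 1 n) 1 h1 hmin
  rw [rS2_eq_pow_mul _ hne, hcard] at this
  exact this
end

section
/- For every n ≥ 1, Σ_λ P_2(λ)/z_λ (sum over binary partitions λ of n) equals (C_{n−1}² · n!/4^{n−1}) · Σ_μ n(n−1)⋯(n−|μ|+1) / ( z_μ · ∏_{i=1}^{ℓ(μ)} ∏_{j=1}^{μ_i−1} (2n − 2(μ_1+⋯+μ_{i−1}) − 2j − 1)² ), where the second sum runs over all binary partitions μ (including the empty partition, whose summand is 1) with every part equal to a power of 2 that is at least 2 and with |μ| ≤ n. -/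
/-- `z_λ = ∏_i i^{m_i} · m_i!` for a partition with `m_i` parts equal to `i`,
presented as a multiset of parts. -/
def partZ (M : Multiset ℕ) : ℕ :=
  M.prod * (M.dedup.map fun i => (M.count i).factorial).prod

/-- `P_k(λ) = ∏_{i=2}^{ℓ} (2(λ_i + ⋯ + λ_ℓ) - 1)^k` for a partition
`λ_1 ≥ λ_2 ≥ ⋯ ≥ λ_ℓ`, presented as a multiset of parts: the tail sums of the
decreasing arrangement are the prefix sums of the increasing arrangement. -/
def partP (k : ℕ) (M : Multiset ℕ) : ℕ :=
  ∏ j ∈ Finset.range ((M.sort (· ≤ ·)).length - 1),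
    (2 * ((M.sort (· ≤ ·)).take (j + 1)).sum - 1) ^ k

/-- `Σ_λ P_k(λ)/z_λ`, the sum over binary partitions `λ` of `n`; by Theorem 1 of the
paper this is the number of tangled chains of length `k` (for `k = 2`, tanglegrams). -/
noncomputable def binPartSum (k n : ℕ) : ℚ :=
  ∑ᶠ (mu : n.Partition) (_ : ∀ p ∈ mu.parts, ∃ i : ℕ, p = 2 ^ i),
    (partP k mu.parts : ℚ) / (partZ mu.parts : ℚ)

open Finset

/-- the target product `∏_{m<k} (2m+1)^2`. -/
private def Gq (k : ℕ) : ℚ := ∏ m ∈ range k, (2 * (m : ℚ) + 1) ^ 2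

/-- rational version of `partP 2` on lists. -/
private def listPq (L : List ℕ) : ℚ :=
  ∏ j ∈ range (L.length - 1), (2 * (((L.take (j + 1)).sum : ℕ) : ℚ) - 1) ^ 2

/-- the denominator product of Corollary 9. -/
private def Dq (x : ℚ) (R : List ℕ) : ℚ :=
  ∏ i ∈ Finset.range R.length,
    ∏ j ∈ Finset.range (R.getD i 0 - 1),
      (2 * x - 2 * (((R.take i).sum : ℕ) : ℚ) - 2 * ((j : ℚ) + 1) - 1) ^ 2

private lemma listPq_append_singleton (L : List ℕ) (a : ℕ) :
    listPq (L ++ [a]) = listPq L * (2 * ((L.sum : ℕ) : ℚ) - 1) ^ 2 := by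
  rcases eq_or_ne L [] with rfl | h
  · simp [listPq]
  · have hpos : 0 < L.length := List.length_pos_iff.2 h
    have hlen : (L ++ [a]).length - 1 = L.length := by simp
    unfold listPq
    rw [hlen]
    rw [show L.length = (L.length - 1) + 1 by omega, Finset.prod_range_succ]
    congr 1
    · refine Finset.prod_congr rfl fun j hj => ?_
      rw [Finset.mem_range] at hj
      rw [List.take_append_of_le_length (by omega)]
    · rw [show L.length - 1 + 1 = L.length by omega,
        List.take_append_of_le_length le_rfl, List.take_length]

private lemma listPq_replicate (r : ℕ) : listPq (List.replicate r 1) = Gq (r - 1) := by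
  unfold listPq Gq
  rw [List.length_replicate]
  refine Finset.prod_congr rfl fun j hj => ?_
  rw [Finset.mem_range] at hj
  rw [List.take_replicate, List.sum_replicate, smul_eq_mul, mul_one,
    show (j + 1) ⊓ r = j + 1 by omega]
  push_cast
  ring

private lemma Dq_cons (x : ℚ) (a : ℕ) (R : List ℕ) :
    Dq x (a :: R) =
      (∏ j ∈ range (a - 1), (2 * x - 2 * ((j : ℚ) + 1) - 1) ^ 2) *
        Dq (x - (a : ℚ)) R := by
  unfold Dq
  rw [List.length_cons, Finset.prod_range_succ', mul_comm]
  congr 1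
  · simp
  · refine Finset.prod_congr rfl fun i _ => ?_
    simp only [List.getD_cons_succ, List.take_succ_cons, List.sum_cons, Nat.cast_add]
    refine Finset.prod_congr rfl fun j _ => ?_
    ring

private lemma Gq_mul_sq (m : ℕ) : Gq m * (2 * ((m : ℕ) : ℚ) + 1) ^ 2 = Gq (m + 1) := by
  rw [Gq, Gq, Finset.prod_range_succ]

private lemma key_s5 (r : ℕ) (R : List ℕ) (hR : ∀ p ∈ R, 1 ≤ p) :
    listPq (List.replicate r 1 ++ R.reverse) * Dq ((r + R.sum : ℕ) : ℚ) R =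
      Gq (r + R.sum - 1) := by
  induction R with
  | nil => simpa [Dq] using listPq_replicate r
  | cons a R ih =>
    have ha : 1 ≤ a := hR a List.mem_cons_self
    have hR' : ∀ p ∈ R, 1 ≤ p := fun p hp => hR p (List.mem_cons_of_mem _ hp)
    have hrev : (a :: R).reverse = R.reverse ++ [a] := by simp
    have hx : ((r + (a :: R).sum : ℕ) : ℚ) - (a : ℚ) = ((r + R.sum : ℕ) : ℚ) := by
      rw [List.sum_cons]; push_cast; ring
    have htot : r + (a :: R).sum - 1 = (r + R.sum) + (a - 1) := by
      rw [List.sum_cons]; omega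
    rw [hrev, ← List.append_assoc, listPq_append_singleton, Dq_cons, hx, htot]
    set n' : ℕ := r + R.sum with hn'
    clear_value n'
    have hsum : (List.replicate r 1 ++ R.reverse).sum = n' := by
      rw [List.sum_append, List.sum_replicate, List.sum_reverse, smul_eq_mul, mul_one, hn']
    have hcast : ((r + (a :: R).sum : ℕ) : ℚ) = (n' : ℚ) + (a : ℚ) := by
      rw [List.sum_cons, hn']; push_cast; ring
    have hmain : listPq (List.replicate r 1 ++ R.reverse) * Dq ((n' : ℕ) : ℚ) R =
        Gq (n' - 1) := ih hR'
    have step1 : Gq (n' - 1) * (2 * ((n' : ℕ) : ℚ) - 1) ^ 2 = Gq n' := by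
      rcases Nat.eq_zero_or_pos n' with h0 | h0
      · rw [h0]; norm_num [Gq]
      · have h2 : (2 * ((n' - 1 : ℕ) : ℚ) + 1) ^ 2 = (2 * ((n' : ℕ) : ℚ) - 1) ^ 2 := by
          rw [Nat.cast_sub h0]; ring
        calc Gq (n' - 1) * (2 * ((n' : ℕ) : ℚ) - 1) ^ 2
            = Gq (n' - 1) * (2 * ((n' - 1 : ℕ) : ℚ) + 1) ^ 2 := by rw [h2]
          _ = Gq ((n' - 1) + 1) := Gq_mul_sq _
          _ = Gq n' := by rw [Nat.sub_add_cancel h0]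
    have step2 : Gq n' * (∏ j ∈ range (a - 1),
        (2 * ((r + (a :: R).sum : ℕ) : ℚ) - 2 * ((j : ℚ) + 1) - 1) ^ 2) =
        Gq (n' + (a - 1)) := by
      have hadd : Gq (n' + (a - 1)) =
          Gq n' * ∏ j ∈ range (a - 1), (2 * (((n' + j : ℕ)) : ℚ) + 1) ^ 2 := by
        unfold Gq
        exact Finset.prod_range_add _ n' (a - 1)
      rw [hadd]
      congr 1
      rw [← Finset.prod_range_reflect (fun j => (2 * (((n' + j : ℕ)) : ℚ) + 1) ^ 2) (a - 1)]
      refine Finset.prod_congr rfl fun j hj => ?_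
      rw [Finset.mem_range] at hj
      have h1 : ((n' + (a - 1 - 1 - j) : ℕ) : ℚ) = (n' : ℚ) + (a : ℚ) - 2 - (j : ℚ) := by
        rw [show n' + (a - 1 - 1 - j) = n' + a - (2 + j) by omega,
          Nat.cast_sub (by omega)]
        push_cast
        ring
      rw [h1, hcast]
      ring
    rw [hsum, ← step2, ← step1, ← hmain]
    ring

private lemma partP_cast (nu : Multiset ℕ) (h : ∀ p ∈ nu, 1 ≤ p) :
    (partP 2 nu : ℚ) = listPq (nu.sort (· ≤ ·)) := by
  unfold partP listPq
  push_cast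
  refine Finset.prod_congr rfl fun j hj => ?_
  rw [Finset.mem_range] at hj
  set L := nu.sort (· ≤ ·) with hL
  have hlen : 0 < (L.take (j + 1)).length := by
    rw [List.length_take]
    omega
  have hsum : 1 ≤ (L.take (j + 1)).sum := by
    rcases List.exists_mem_of_length_pos hlen with ⟨x, hx⟩
    have hx1 : 1 ≤ x := h x (Multiset.mem_sort (· ≤ ·) |>.1 (List.take_subset _ _ hx))
    by_contra hc
    have : (L.take (j + 1)).sum = 0 := by omega
    have := List.sum_eq_zero_iff.1 this x hx
    omega
  rw [Nat.cast_sub (by omega : 1 ≤ 2 * (L.take (j + 1)).sum)]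
  push_cast
  ring

private lemma sort_add_replicate (M : Multiset ℕ) (r : ℕ) (h : ∀ p ∈ M, 1 ≤ p) :
    (M + Multiset.replicate r 1).sort (· ≤ ·) = List.replicate r 1 ++ M.sort (· ≤ ·) := by
  refine (fun hp h1 h2 => List.Perm.eq_of_pairwise' (r := (· ≤ ·)) h1 h2 hp) ?_ ?_ ?_
  · apply Multiset.coe_eq_coe.1
    rw [Multiset.sort_eq, ← Multiset.coe_add, Multiset.coe_replicate, Multiset.sort_eq,
      add_comm]
  · exact Multiset.pairwise_sort _ _
  · rw [List.pairwise_append]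
    refine ⟨List.pairwise_replicate.2 (Or.inr le_rfl), Multiset.pairwise_sort _ _, ?_⟩
    intro x hx y hy
    rw [List.eq_of_mem_replicate hx]
    exact h y (Multiset.mem_sort (· ≤ ·) |>.1 hy)

private lemma partZ_eq (nu : Multiset ℕ) :
    partZ nu = nu.prod * ∏ i ∈ nu.toFinset, (nu.count i).factorial := rfl

private lemma partZ_pos (nu : Multiset ℕ) (h : (0 : ℕ) ∉ nu) : 0 < partZ nu := by
  rw [partZ_eq]
  apply Nat.mul_pos
  · exact Nat.pos_of_ne_zero fun h0 => h (Multiset.prod_eq_zero_iff.1 h0)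
  · exact Finset.prod_pos fun i _ => Nat.factorial_pos _

private lemma partZ_add_replicate (M : Multiset ℕ) (r : ℕ) (h : (1 : ℕ) ∉ M) :
    partZ (M + Multiset.replicate r 1) = partZ M * r.factorial := by
  rcases Nat.eq_zero_or_pos r with rfl | hr
  · simp [Nat.factorial]
  · rw [partZ_eq, partZ_eq]
    have hprod : (M + Multiset.replicate r 1).prod = M.prod := by
      rw [Multiset.prod_add, Multiset.prod_replicate, one_pow, mul_one]
    have htf : (M + Multiset.replicate r 1).toFinset = insert 1 M.toFinset := by
      rw [Multiset.toFinset_add, Multiset.toFinset_replicate, if_neg (by omega),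
        Finset.union_comm, ← Finset.insert_eq]
    have h1 : (1 : ℕ) ∉ M.toFinset := by simpa using h
    rw [hprod, htf, Finset.prod_insert h1]
    have hc1 : (M + Multiset.replicate r 1).count 1 = r := by
      rw [Multiset.count_add, Multiset.count_replicate, if_pos rfl,
        Multiset.count_eq_zero_of_notMem h, zero_add]
    have hci : ∀ i ∈ M.toFinset, ((M + Multiset.replicate r 1).count i).factorial
        = (M.count i).factorial := by
      intro i hi
      have hne : i ≠ 1 := fun he => h1 (he ▸ hi)
      rw [Multiset.count_add, Multiset.count_replicate, if_neg (fun he => hne he.symm),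
        add_zero]
    rw [hc1, Finset.prod_congr rfl hci]
    ring

private lemma Dq_pos (n : ℕ) (R : List ℕ) (h : R.sum ≤ n) : 0 < Dq ((n : ℕ) : ℚ) R := by
  induction R generalizing n with
  | nil => simp [Dq]
  | cons a R ih =>
    rw [List.sum_cons] at h
    have ha : a ≤ n := by omega
    have hx : ((n : ℕ) : ℚ) - (a : ℚ) = ((n - a : ℕ) : ℚ) := by
      rw [Nat.cast_sub ha]
    rw [Dq_cons, hx]
    apply mul_pos
    · apply Finset.prod_pos
      intro j hj
      rw [Finset.mem_range] at hj
      have h2 : (j : ℚ) + 2 ≤ (n : ℚ) := by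
        exact_mod_cast (by omega : j + 2 ≤ n)
      have : 0 < 2 * ((n : ℕ) : ℚ) - 2 * ((j : ℚ) + 1) - 1 := by linarith
      positivity
    · exact ih (n - a) (by omega)

private def oddProd (k : ℕ) : ℕ := ∏ m ∈ range k, (2 * m + 1)

private lemma oddProd_mul (k : ℕ) : oddProd k * (2 ^ k * k.factorial) = (2 * k).factorial := by
  induction k with
  | zero => simp [oddProd]
  | succ k ih =>
    have h2 : 2 * (k + 1) = (2 * k + 1) + 1 := by ring
    rw [oddProd, Finset.prod_range_succ, ← oddProd, h2, Nat.factorial_succ,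
      Nat.factorial_succ, Nat.factorial_succ, pow_succ, ← ih]
    ring

private lemma Gq_sq (k : ℕ) : Gq k = ((oddProd k : ℕ) : ℚ) ^ 2 := by
  unfold Gq oddProd
  rw [Finset.prod_pow]
  push_cast
  rfl

private lemma catalan_eq (n : ℕ) (hn : 1 ≤ n) :
    (catalan (n - 1) : ℚ) ^ 2 * (n.factorial : ℚ) / 4 ^ (n - 1) =
      Gq (n - 1) / (n.factorial : ℚ) := by
  obtain ⟨k, rfl⟩ : ∃ k, n = k + 1 := ⟨n - 1, by omega⟩
  simp only [Nat.add_sub_cancel]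
  have h1 : (k + 1) * catalan k * (k.factorial * k.factorial) = (2 * k).factorial := by
    rw [succ_mul_catalan_eq_centralBinom, Nat.centralBinom]
    have := Nat.choose_mul_factorial_mul_factorial (by omega : k ≤ 2 * k)
    rw [show 2 * k - k = k by omega] at this
    rw [← this]
    ring
  have h2 := oddProd_mul k
  have h1q : ((k : ℚ) + 1) * (catalan k : ℚ) * ((k.factorial : ℚ) * (k.factorial : ℚ))
      = ((2 * k).factorial : ℚ) := by exact_mod_cast h1
  have h2q : (oddProd k : ℚ) * ((2 : ℚ) ^ k * (k.factorial : ℚ))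
      = ((2 * k).factorial : ℚ) := by exact_mod_cast h2
  have hk : (k.factorial : ℚ) ≠ 0 := Nat.cast_ne_zero.2 (Nat.factorial_ne_zero k)
  have hQ : ((k : ℚ) + 1) * (catalan k : ℚ) * (k.factorial : ℚ)
      = (oddProd k : ℚ) * (2 : ℚ) ^ k := by
    apply mul_right_cancel₀ hk
    rw [← h2q] at h1q
    linear_combination h1q
  have hf : ((k + 1).factorial : ℚ) = ((k : ℚ) + 1) * (k.factorial : ℚ) := by
    rw [Nat.factorial_succ]
    push_cast
    ring
  rw [Gq_sq, hf]
  have h4 : (4 : ℚ) ^ k = (2 : ℚ) ^ k * (2 : ℚ) ^ k := by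
    rw [← mul_pow]
    norm_num
  have hk1 : ((k : ℚ) + 1) * (k.factorial : ℚ) ≠ 0 := by positivity
  have h2k : (2 : ℚ) ^ k ≠ 0 := by positivity
  rw [div_eq_div_iff (by positivity) hk1]
  rw [h4]
  linear_combination
    (((k : ℚ) + 1) * (catalan k : ℚ) * (k.factorial : ℚ) + (oddProd k : ℚ) * 2 ^ k) * hQ

private lemma term_eq (n : ℕ) (hn : 1 ≤ n) (M : Multiset ℕ) (hs : M.sum ≤ n)
    (hp : ∀ p ∈ M, 2 ≤ p) :
    (partP 2 (M + Multiset.replicate (n - M.sum) 1) : ℚ) /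
        (partZ (M + Multiset.replicate (n - M.sum) 1) : ℚ) =
      ((catalan (n - 1) : ℚ) ^ 2 * (n.factorial : ℚ) / 4 ^ (n - 1)) *
        ((n.descFactorial M.sum : ℚ) /
          ((partZ M : ℚ) * Dq ((n : ℕ) : ℚ) ((M.sort (· ≤ ·)).reverse))) := by
  have h1 : ∀ p ∈ M, 1 ≤ p := fun p hp' => le_trans one_le_two (hp p hp')
  have hnot1 : (1 : ℕ) ∉ M := fun hm => by have := hp 1 hm; omega
  have hnot0 : (0 : ℕ) ∉ M := fun hm => by have := hp 0 hm; omega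
  have hnu1 : ∀ p ∈ M + Multiset.replicate (n - M.sum) 1, 1 ≤ p := by
    intro p hpm
    rcases Multiset.mem_add.1 hpm with hpm | hpm
    · exact h1 p hpm
    · rw [Multiset.eq_of_mem_replicate hpm]
  rw [partP_cast _ hnu1, sort_add_replicate M _ h1, partZ_add_replicate M _ hnot1]
  set R : List ℕ := (M.sort (· ≤ ·)).reverse with hR
  have hRrev : R.reverse = M.sort (· ≤ ·) := List.reverse_reverse _
  have hRsum : R.sum = M.sum := by
    rw [hR, List.sum_reverse]
    have := congrArg Multiset.sum (Multiset.sort_eq M (· ≤ ·))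
    rwa [Multiset.sum_coe] at this
  have hR1 : ∀ p ∈ R, 1 ≤ p := by
    intro p hpm
    exact h1 p ((Multiset.mem_sort _).1 (by rw [← hRrev]; exact List.mem_reverse.2 hpm))
  have hkey := key_s5 (n - M.sum) R hR1
  rw [hRrev, hRsum, show n - M.sum + M.sum = n by omega] at hkey
  have hdf : (n.descFactorial M.sum : ℚ) * ((n - M.sum).factorial : ℚ)
      = (n.factorial : ℚ) := by
    have := Nat.factorial_mul_descFactorial hs
    exact_mod_cast by rw [mul_comm]; exact this
  have hZ : (partZ M : ℚ) ≠ 0 := Nat.cast_ne_zero.2 (partZ_pos M hnot0).ne'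
  have hD : Dq ((n : ℕ) : ℚ) R ≠ 0 := (Dq_pos n R (by omega)).ne'
  have hrf : ((n - M.sum).factorial : ℚ) ≠ 0 :=
    Nat.cast_ne_zero.2 (Nat.factorial_ne_zero _)
  have hF : (n.factorial : ℚ) ≠ 0 := Nat.cast_ne_zero.2 (Nat.factorial_ne_zero _)
  have hdfne : (n.descFactorial M.sum : ℚ) ≠ 0 := by
    intro h0
    rw [h0, zero_mul] at hdf
    exact hF hdf.symm
  rw [catalan_eq n hn, ← hkey, ← hdf]
  push_cast
  field_simp

private noncomputable def padP (n : ℕ) (M : Multiset ℕ) : n.Partition := by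
  classical
  exact if h : M.sum ≤ n ∧ ∀ p ∈ M, 0 < p then
    ⟨M + Multiset.replicate (n - M.sum) 1, by
      intro i hi
      rcases Multiset.mem_add.1 hi with hi | hi
      · exact h.2 i hi
      · rw [Multiset.eq_of_mem_replicate hi]; norm_num, by
      rw [Multiset.sum_add, Multiset.sum_replicate, smul_eq_mul, mul_one]
      omega⟩
  else
    ⟨Multiset.replicate n 1, fun hi => by rw [Multiset.eq_of_mem_replicate hi]; norm_num,
      by rw [Multiset.sum_replicate, smul_eq_mul, mul_one]⟩

private lemma padP_parts (n : ℕ) (M : Multiset ℕ) (h : M.sum ≤ n ∧ ∀ p ∈ M, 0 < p) :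
    (padP n M).parts = M + Multiset.replicate (n - M.sum) 1 := by
  unfold padP
  rw [dif_pos h]

private lemma decomp (n : ℕ) (mu : n.Partition) (hmu : ∀ p ∈ mu.parts, ∃ i : ℕ, p = 2 ^ i) :
    mu.parts = Multiset.filter (· ≠ 1) mu.parts +
        Multiset.replicate (n - (Multiset.filter (· ≠ 1) mu.parts).sum) 1 ∧
      (Multiset.filter (· ≠ 1) mu.parts).sum ≤ n ∧
      ∀ p ∈ Multiset.filter (· ≠ 1) mu.parts, ∃ i : ℕ, 1 ≤ i ∧ p = 2 ^ i := by
  classical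
  set F := Multiset.filter (· ≠ 1) mu.parts with hF
  have h2 : Multiset.filter (fun a => ¬a ≠ 1) mu.parts =
      Multiset.replicate (mu.parts.count 1) 1 := by
    rw [Multiset.filter_congr (fun x _ => by simp : ∀ x ∈ mu.parts, (¬x ≠ 1) ↔ x = 1)]
    exact Multiset.filter_eq' _ _
  have hdec : F + Multiset.replicate (mu.parts.count 1) 1 = mu.parts := by
    rw [hF, ← h2]
    exact Multiset.filter_add_not _ _
  have hsum : F.sum + mu.parts.count 1 = n := by
    have h3 := congrArg Multiset.sum hdec
    rw [Multiset.sum_add, Multiset.sum_replicate, smul_eq_mul, mul_one] at h3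
    rw [h3, mu.parts_sum]
  have hc : mu.parts.count 1 = n - F.sum := by omega
  refine ⟨by rw [← hc, hdec], by omega, ?_⟩
  intro p hp
  have hp1 := Multiset.of_mem_filter hp
  obtain ⟨i, rfl⟩ := hmu p (Multiset.mem_of_mem_filter hp)
  refine ⟨i, ?_, rfl⟩
  rcases Nat.eq_zero_or_pos i with rfl | hi
  · simp at hp1
  · exact hi

/-- **Corollary 9**: `Σ_λ P_2(λ)/z_λ` over binary partitions `λ` of `n` equals
`(C_{n-1}² n!/4^{n-1}) · Σ_μ n(n-1)⋯(n-|μ|+1) / (z_μ ∏_{i=1}^{ℓ(μ)} ∏_{j=1}^{μ_i - 1}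
(2n - 2(μ_1 + ⋯ + μ_{i-1}) - 2j - 1)²)`, summed over binary partitions `μ` (as multisets,
including the empty one) whose parts are powers of `2` that are at least `2` and with
`|μ| ≤ n`; `μ_1 ≥ μ_2 ≥ …` is the decreasing arrangement of `μ`. -/
theorem tanglegram_count_alt (n : ℕ) (hn : 1 ≤ n) :
    binPartSum 2 n =
      ((catalan (n - 1) : ℚ) ^ 2 * (n.factorial : ℚ) / 4 ^ (n - 1)) *
        ∑ᶠ (M : Multiset ℕ) (_ : M.sum ≤ n ∧ ∀ p ∈ M, ∃ i : ℕ, 1 ≤ i ∧ p = 2 ^ i),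
          (n.descFactorial M.sum : ℚ) /
            ((partZ M : ℚ) *
              ∏ i ∈ Finset.range (M.sort (· ≤ ·)).reverse.length,
                ∏ j ∈ Finset.range ((M.sort (· ≤ ·)).reverse.getD i 0 - 1),
                  (2 * (n : ℚ) - 2 * (((M.sort (· ≤ ·)).reverse.take i).sum : ℚ) -
                      2 * ((j : ℚ) + 1) - 1) ^ 2) := by
  classical
  show binPartSum 2 n =
      ((catalan (n - 1) : ℚ) ^ 2 * (n.factorial : ℚ) / 4 ^ (n - 1)) *
        ∑ᶠ (M : Multiset ℕ) (_ : M.sum ≤ n ∧ ∀ p ∈ M, ∃ i : ℕ, 1 ≤ i ∧ p = 2 ^ i),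
          (n.descFactorial M.sum : ℚ) /
            ((partZ M : ℚ) * Dq ((n : ℕ) : ℚ) ((M.sort (· ≤ ·)).reverse))
  set cnd : Multiset ℕ → Prop :=
    fun M => M.sum ≤ n ∧ ∀ p ∈ M, ∃ i : ℕ, 1 ≤ i ∧ p = 2 ^ i with hcnd
  set T : Finset (Multiset ℕ) :=
    ((Finset.range (n + 1)).biUnion fun k =>
      (Finset.univ : Finset (Nat.Partition k)).image Nat.Partition.parts).filter cnd
    with hTdef
  have hT : ∀ M : Multiset ℕ, cnd M ↔ M ∈ T := by
    intro M
    constructor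
    · intro h
      refine Finset.mem_filter.2 ⟨Finset.mem_biUnion.2
        ⟨M.sum, Finset.mem_range.2 (Nat.lt_succ_of_le h.1),
          Finset.mem_image.2 ⟨⟨M, ?_, rfl⟩, Finset.mem_univ _, rfl⟩⟩, h⟩
      intro p hp
      obtain ⟨i, hi, rfl⟩ := h.2 p hp
      positivity
    · exact fun h => (Finset.mem_filter.1 h).2
  have hRHS : (∑ᶠ (M : Multiset ℕ) (_ : cnd M),
      (n.descFactorial M.sum : ℚ) /
        ((partZ M : ℚ) * Dq ((n : ℕ) : ℚ) ((M.sort (· ≤ ·)).reverse))) =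
      ∑ M ∈ T, (n.descFactorial M.sum : ℚ) /
        ((partZ M : ℚ) * Dq ((n : ℕ) : ℚ) ((M.sort (· ≤ ·)).reverse)) := by
    rw [← finsum_mem_coe_finset]
    apply finsum_congr
    intro M
    rw [finsum_eq_if, finsum_eq_if]
    exact if_congr (by simpa using hT M) rfl rfl
  rw [hRHS, Finset.mul_sum]
  unfold binPartSum
  rw [finsum_eq_sum_of_fintype]
  have hL : ∀ mu : n.Partition,
      (∑ᶠ _ : (∀ p ∈ mu.parts, ∃ i : ℕ, p = 2 ^ i),
        (partP 2 mu.parts : ℚ) / (partZ mu.parts : ℚ)) =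
      if (∀ p ∈ mu.parts, ∃ i : ℕ, p = 2 ^ i) then
        (partP 2 mu.parts : ℚ) / (partZ mu.parts : ℚ) else 0 := fun mu => finsum_eq_if
  rw [Finset.sum_congr rfl fun mu _ => hL mu, ← Finset.sum_filter]
  refine Finset.sum_nbij' (fun mu => Multiset.filter (· ≠ 1) mu.parts) (padP n)
    ?_ ?_ ?_ ?_ ?_
  · intro mu hmu
    rw [Finset.mem_filter] at hmu
    obtain ⟨hd, hs, hpow⟩ := decomp n mu hmu.2
    exact (hT _).1 ⟨hs, hpow⟩
  · intro M hM
    have hc := (hT M).2 hM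
    have hpos : M.sum ≤ n ∧ ∀ p ∈ M, 0 < p := by
      refine ⟨hc.1, fun p hp => ?_⟩
      obtain ⟨i, hi, rfl⟩ := hc.2 p hp
      positivity
    rw [Finset.mem_filter]
    refine ⟨Finset.mem_univ _, ?_⟩
    rw [padP_parts n M hpos]
    intro p hp
    rcases Multiset.mem_add.1 hp with hp | hp
    · obtain ⟨i, hi, rfl⟩ := hc.2 p hp
      exact ⟨i, rfl⟩
    · rw [Multiset.eq_of_mem_replicate hp]
      exact ⟨0, rfl⟩
  · intro mu hmu
    rw [Finset.mem_filter] at hmu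
    obtain ⟨hd, hs, hpow⟩ := decomp n mu hmu.2
    apply Nat.Partition.ext
    rw [padP_parts n _ ⟨hs, fun p hp => ?_⟩]
    · exact hd.symm
    · obtain ⟨i, hi, rfl⟩ := hpow p hp
      positivity
  · intro M hM
    have hc := (hT M).2 hM
    have hpos : M.sum ≤ n ∧ ∀ p ∈ M, 0 < p := by
      refine ⟨hc.1, fun p hp => ?_⟩
      obtain ⟨i, hi, rfl⟩ := hc.2 p hp
      positivity
    show Multiset.filter (· ≠ 1) (padP n M).parts = M
    rw [padP_parts n M hpos, Multiset.filter_add]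
    have h1 : Multiset.filter (· ≠ 1) M = M := by
      rw [Multiset.filter_eq_self]
      intro p hp
      obtain ⟨i, hi, rfl⟩ := hc.2 p hp
      have : (2 : ℕ) ≤ 2 ^ i := by
        calc (2 : ℕ) = 2 ^ 1 := by norm_num
        _ ≤ 2 ^ i := Nat.pow_le_pow_right (by norm_num) hi
      omega
    have h2 : Multiset.filter (· ≠ 1) (Multiset.replicate (n - M.sum) 1) = 0 := by
      rw [Multiset.filter_eq_nil]
      intro p hp
      rw [Multiset.eq_of_mem_replicate hp]
      simp
    rw [h1, h2, add_zero]
  · intro mu hmu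
    rw [Finset.mem_filter] at hmu
    obtain ⟨hd, hs, hpow⟩ := decomp n mu hmu.2
    have h2le : ∀ p ∈ Multiset.filter (· ≠ 1) mu.parts, 2 ≤ p := by
      intro p hp
      obtain ⟨i, hi, rfl⟩ := hpow p hp
      calc (2 : ℕ) = 2 ^ 1 := by norm_num
      _ ≤ 2 ^ i := Nat.pow_le_pow_right (by norm_num) hi
    rw [show ((partP 2 mu.parts : ℚ) / (partZ mu.parts : ℚ)) =
      ((partP 2 (Multiset.filter (· ≠ 1) mu.parts +
          Multiset.replicate (n - (Multiset.filter (· ≠ 1) mu.parts).sum) 1) : ℚ) /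
        (partZ (Multiset.filter (· ≠ 1) mu.parts +
          Multiset.replicate (n - (Multiset.filter (· ≠ 1) mu.parts).sum) 1) : ℚ)) from by
      rw [← hd]]
    exact term_eq n hn _ hs h2le
end

section
/- For every n ≥ 1, Σ_λ P_2(λ)/z_λ (sum over binary partitions λ of n) equals r(0, n, 0)/(2n−1)², where r is the recursively defined function given in the context. (Equivalently, the number of tanglegrams of size n is r(0,n,0)/f²(n) with f²(s) = (2s−1)².) -/
/-- `c^k(h, m, s) = ∏_{j=1}^{m} f^k(s + j·2^h)/(j·2^h)` where `f^k(s) = (2s-1)^k`;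
in particular `c^k(h, 0, s) = 1`. -/
def cfun (k h m s : ℕ) : ℚ :=
  ∏ j ∈ Finset.Icc 1 m,
    (2 * ((s : ℚ) + (j : ℚ) * (2 : ℚ) ^ h) - 1) ^ k / ((j : ℚ) * (2 : ℚ) ^ h)

/-- `r^k(h, n, s) = Σ_{m = 0, n - m even}^{n} c^k(h, m, s) · r^k(h+1, (n-m)/2, s + m·2^h)`
with base case `r^k(h, 0, s) = 1`. -/
def rfun (k : ℕ) (h n s : ℕ) : ℚ :=
  if _hn : n = 0 then 1
  else
    ∑ m ∈ (Finset.range (n + 1)).filter fun m => (n - m) % 2 = 0,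
      cfun k h m s * rfun k (h + 1) ((n - m) / 2) (s + m * 2 ^ h)
termination_by n
decreasing_by omega

namespace TGAux
open Finset

/-- numerator weight: product over prefix sums (shifted by `s`, scaled by `2^h`). -/
def wNum (h : ℕ) : ℕ → List ℕ → ℚ
  | _, [] => 1
  | s, a :: l => (2 * ((s : ℚ) + (a : ℚ) * 2 ^ h) - 1) ^ 2 * wNum h (s + a * 2 ^ h) l

/-- the full weight of a binary partition (as multiset), at level h, shift s -/
noncomputable def wt (h s : ℕ) (M : Multiset ℕ) : ℚ :=
  wNum h s (M.sort (· ≤ ·)) / ((2 : ℚ) ^ (h * Multiset.card M) * (partZ M : ℚ))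

lemma wNum_replicate_append (h m : ℕ) : ∀ (s : ℕ) (L : List ℕ),
    wNum h s (List.replicate m 1 ++ L) =
      (∏ j ∈ Finset.Icc 1 m, (2 * ((s : ℚ) + (j : ℚ) * 2 ^ h) - 1) ^ 2) *
        wNum h (s + m * 2 ^ h) L := by
  induction m with
  | zero => intro s L; simp [wNum]
  | succ m ih =>
    intro s L
    rw [List.replicate_succ', List.append_assoc, ih, List.singleton_append, wNum,
      Finset.prod_Icc_succ_top (Nat.le_add_left 1 m)]
    have h2 : s + m * 2 ^ h + 1 * 2 ^ h = s + (m + 1) * 2 ^ h := by ring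
    rw [h2]
    push_cast
    ring

lemma wNum_map_two (h : ℕ) : ∀ (s : ℕ) (L : List ℕ),
    wNum h s (L.map (fun x => 2 * x)) = wNum (h + 1) s L := by
  intro s L
  induction L generalizing s with
  | nil => simp [wNum]
  | cons a l ih =>
    rw [List.map_cons, wNum, wNum, ih]
    have h1 : ((2 * a : ℕ) : ℚ) * 2 ^ h = (a : ℚ) * 2 ^ (h + 1) := by push_cast; ring
    have h2 : s + 2 * a * 2 ^ h = s + a * 2 ^ (h + 1) := by ring
    rw [h1, h2]

end TGAux

namespace TGAux2
open Finset

lemma sort_glue (m : ℕ) (N : Multiset ℕ) (hN : ∀ x ∈ N, 0 < x) :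
    (Multiset.replicate m 1 + N.map (fun x => 2 * x)).sort (· ≤ ·) =
      List.replicate m 1 ++ ((N.sort (· ≤ ·)).map (fun x => 2 * x) : List ℕ) := by
  have hsorted : List.Pairwise (· ≤ ·)
      (List.replicate m 1 ++ ((N.sort (· ≤ ·)).map (fun x => 2 * x))) := by
    rw [List.pairwise_append]
    refine ⟨?_, ?_, ?_⟩
    · exact (List.pairwise_replicate).2 (Or.inr le_rfl)
    · exact List.Pairwise.map _ (fun a b hab => by omega) (Multiset.pairwise_sort N _)
    · intro a ha b hb
      rw [List.eq_of_mem_replicate ha]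
      obtain ⟨x, hx, rfl⟩ := List.mem_map.1 hb
      have := hN x (Multiset.mem_sort _ |>.1 hx)
      omega
  refine List.Perm.eq_of_pairwise' (Multiset.pairwise_sort _ _) hsorted (Multiset.coe_eq_coe.mp ?_)
  rw [Multiset.sort_eq]
  rw [← Multiset.coe_add, ← Multiset.map_coe, Multiset.sort_eq, Multiset.coe_replicate]

end TGAux2

namespace TGAux3
open Finset

lemma partZ_pos (M : Multiset ℕ) (hM : ∀ x ∈ M, 0 < x) : 0 < partZ M := by
  unfold partZ
  apply Nat.mul_pos
  · exact Multiset.prod_pos hM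
  · exact Multiset.prod_pos (by
      intro a ha
      obtain ⟨i, hi, rfl⟩ := Multiset.mem_map.1 ha
      exact Nat.factorial_pos _)

lemma partZ_map_two (N : Multiset ℕ) :
    partZ (N.map (fun x => 2 * x)) = 2 ^ Multiset.card N * partZ N := by
  have hinj : Function.Injective (fun x : ℕ => 2 * x) := fun a b hab => by dsimp at hab; omega
  unfold partZ
  rw [Multiset.prod_map_mul]
  rw [Multiset.dedup_map_of_injective hinj]
  rw [Multiset.map_map]
  have : (Multiset.map ((fun i => (Multiset.count i (Multiset.map (fun x => 2*x) N)).factorial) ∘ (fun x => 2*x)) N.dedup)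
      = Multiset.map (fun i => (Multiset.count i N).factorial) N.dedup := by
    apply Multiset.map_congr rfl
    intro x hx
    simp only [Function.comp]
    rw [Multiset.count_map_eq_count' _ _ hinj]
  rw [this]
  simp only [Multiset.map_const', Multiset.prod_replicate, Multiset.map_id']
  ring

lemma partZ_one_add (m : ℕ) (N : Multiset ℕ) (hN : (1 : ℕ) ∉ N) :
    partZ (Multiset.replicate m 1 + N) = m.factorial * partZ N := by
  rcases Nat.eq_zero_or_pos m with rfl | hm
  · simp [partZ]
  unfold partZ
  have hded : (Multiset.replicate m 1 + N).dedup = 1 ::ₘ N.dedup := by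
    rw [Multiset.Nodup.ext (Multiset.nodup_dedup _)]
    · intro a
      simp only [Multiset.mem_dedup, Multiset.mem_add, Multiset.mem_replicate,
        Multiset.mem_cons]
      constructor
      · rintro (⟨-, rfl⟩ | ha); · exact Or.inl rfl
        exact Or.inr ha
      · rintro (rfl | ha); · exact Or.inl ⟨by omega, rfl⟩
        exact Or.inr ha
    · exact Multiset.nodup_cons.2 ⟨fun h => hN (Multiset.mem_dedup.1 h), Multiset.nodup_dedup _⟩
  rw [hded, Multiset.map_cons, Multiset.prod_cons, Multiset.prod_add,
    Multiset.prod_replicate, one_pow, one_mul]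
  have hc1 : Multiset.count 1 (Multiset.replicate m 1 + N) = m := by
    simp [Multiset.count_add, Multiset.count_replicate, Multiset.count_eq_zero.2 hN]
  have hmap : Multiset.map (fun i => (Multiset.count i (Multiset.replicate m 1 + N)).factorial) N.dedup
      = Multiset.map (fun i => (Multiset.count i N).factorial) N.dedup := by
    apply Multiset.map_congr rfl
    intro x hx
    have hx1 : x ≠ 1 := fun h => hN (h ▸ Multiset.mem_dedup.1 hx)
    rw [Multiset.count_add, Multiset.count_replicate, if_neg (by omega), zero_add]
  rw [hc1, hmap]
  ring

end TGAux3

namespace TGAux4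
open Finset TGAux TGAux2 TGAux3

lemma prod_Icc_id_factorial (m : ℕ) : (∏ j ∈ Finset.Icc 1 m, j) = m.factorial := by
  induction m with
  | zero => simp
  | succ m ih => rw [Finset.prod_Icc_succ_top (Nat.le_add_left 1 m), ih, Nat.factorial_succ]; ring

lemma cfun_eq (h m s : ℕ) : cfun 2 h m s =
    (∏ j ∈ Finset.Icc 1 m, (2 * ((s : ℚ) + (j : ℚ) * 2 ^ h) - 1) ^ 2) /
      ((2 : ℚ) ^ (h * m) * (m.factorial : ℚ)) := by
  rw [cfun, Finset.prod_div_distrib]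
  congr 1
  rw [Finset.prod_mul_distrib, Finset.prod_const, Nat.card_Icc]
  have : (∏ j ∈ Finset.Icc 1 m, (j : ℚ)) = (m.factorial : ℚ) := by
    rw [← Nat.cast_prod, prod_Icc_id_factorial]
  rw [this, ← pow_mul]
  ring_nf
  simp [mul_comm]

lemma wt_glue (h s m : ℕ) (N : Multiset ℕ) (hN : ∀ x ∈ N, 0 < x) :
    wt h s (Multiset.replicate m 1 + N.map (fun x => 2 * x)) =
      cfun 2 h m s * wt (h + 1) (s + m * 2 ^ h) N := by
  rw [wt, wt, sort_glue m N hN, wNum_replicate_append, wNum_map_two, cfun_eq]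
  rw [partZ_one_add m _ (by
    intro hmem
    obtain ⟨x, hx, hx2⟩ := Multiset.mem_map.1 hmem
    omega), partZ_map_two]
  rw [div_mul_div_comm]
  congr 1
  have hcard : Multiset.card (Multiset.replicate m 1 + Multiset.map (fun x => 2 * x) N)
      = m + Multiset.card N := by simp
  rw [hcard]
  push_cast
  rw [show h * (m + Multiset.card N) = h * m + h * Multiset.card N from by ring, pow_add,
    show (h + 1) * Multiset.card N = h * Multiset.card N + Multiset.card N from by ring, pow_add]
  ring

end TGAux4

namespace TGAux5
open Finset TGAux TGAux2 TGAux3 TGAux4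

open scoped Classical in
noncomputable def binFinset (n : ℕ) : Finset (Nat.Partition n) :=
  Finset.univ.filter fun μ => ∀ p ∈ μ.parts, ∃ i : ℕ, p = 2 ^ i

noncomputable def BM (n : ℕ) : Finset (Multiset ℕ) := (binFinset n).image Nat.Partition.parts

lemma mem_BM {n : ℕ} {M : Multiset ℕ} : M ∈ BM n ↔
    M.sum = n ∧ (∀ p ∈ M, 0 < p) ∧ (∀ p ∈ M, ∃ i : ℕ, p = 2 ^ i) := by
  classical
  constructor
  · rintro hM
    obtain ⟨μ, hμ, rfl⟩ := Finset.mem_image.1 hM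
    rw [binFinset, Finset.mem_filter] at hμ
    exact ⟨μ.parts_sum, fun p hp => μ.parts_pos hp, hμ.2⟩
  · rintro ⟨h1, h2, h3⟩
    refine Finset.mem_image.2 ⟨⟨M, fun hi => h2 _ hi, h1⟩, ?_, rfl⟩
    rw [binFinset, Finset.mem_filter]
    exact ⟨Finset.mem_univ _, h3⟩

lemma sum_binFinset (n : ℕ) (f : Multiset ℕ → ℚ) :
    ∑ μ ∈ binFinset n, f μ.parts = ∑ M ∈ BM n, f M := by
  rw [BM, Finset.sum_image]
  intro a _ b _ hab
  exact Nat.Partition.ext hab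

lemma two_mul_sum_map_div (N : Multiset ℕ) (h : ∀ x ∈ N, 2 ∣ x) :
    2 * (N.map (fun x => x / 2)).sum = N.sum := by
  induction N using Multiset.induction_on with
  | empty => simp
  | cons a N ih =>
    rw [Multiset.map_cons, Multiset.sum_cons, Multiset.sum_cons, mul_add,
      ih (fun x hx => h x (Multiset.mem_cons_of_mem hx)),
      Nat.mul_div_cancel' (h a (Multiset.mem_cons_self a N))]

lemma decomp (M : Multiset ℕ) :
    Multiset.replicate (M.count 1) 1 + M.filter (fun x => ¬ x = 1) = M := by
  conv_rhs => rw [← Multiset.filter_add_not (fun x => x = 1) M]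
  rw [Multiset.filter_eq']

end TGAux5

namespace TGAux6
open Finset TGAux TGAux2 TGAux3 TGAux4 TGAux5

lemma key (n h s : ℕ) :
    ∑ m ∈ (Finset.range (n + 1)).filter (fun m => (n - m) % 2 = 0),
        ∑ N ∈ BM ((n - m) / 2), cfun 2 h m s * wt (h + 1) (s + m * 2 ^ h) N
      = ∑ M ∈ BM n, wt h s M := by
  rw [Finset.sum_sigma']
  refine Finset.sum_bij'
    (fun p _ => Multiset.replicate p.1 1 + p.2.map (fun x => 2 * x))
    (fun M _ => ⟨M.count 1, (M.filter (fun x => ¬ x = 1)).map (fun x => x / 2)⟩)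
    ?_ ?_ ?_ ?_ ?_
  · -- glue lands in BM n
    rintro ⟨m, N⟩ hp
    obtain ⟨hm, hN⟩ := Finset.mem_sigma.1 hp
    rw [Finset.mem_filter, Finset.mem_range] at hm
    obtain ⟨hsum, hpos, hbin⟩ := mem_BM.1 hN
    dsimp only at *
    refine mem_BM.2 ⟨?_, ?_, ?_⟩
    · rw [Multiset.sum_add, Multiset.sum_replicate, Multiset.sum_map_mul_left]
      simp only [Multiset.map_id', smul_eq_mul, mul_one]
      rw [hsum]
      omega
    · intro p hp
      rcases Multiset.mem_add.1 hp with h1 | h2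
      · rw [Multiset.eq_of_mem_replicate h1]; omega
      · obtain ⟨x, hx, rfl⟩ := Multiset.mem_map.1 h2
        have := hpos x hx; omega
    · intro p hp
      rcases Multiset.mem_add.1 hp with h1 | h2
      · exact ⟨0, Multiset.eq_of_mem_replicate h1⟩
      · obtain ⟨x, hx, rfl⟩ := Multiset.mem_map.1 h2
        obtain ⟨i, rfl⟩ := hbin x hx
        exact ⟨i + 1, by rw [pow_succ]; ring⟩
  · -- unglue lands in sigma
    rintro M hM
    obtain ⟨hsum, hpos, hbin⟩ := mem_BM.1 hM
    set F := M.filter (fun x => ¬ x = 1) with hF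
    have hFdvd : ∀ x ∈ F, 2 ∣ x := by
      intro x hx
      obtain ⟨hxM, hx1⟩ := Multiset.mem_filter.1 hx
      obtain ⟨i, rfl⟩ := hbin x hxM
      cases i with
      | zero => simp at hx1
      | succ i => exact ⟨2 ^ i, by rw [pow_succ]; ring⟩
    have hdec : Multiset.replicate (M.count 1) 1 + F = M := decomp M
    have hsplit : M.count 1 + F.sum = n := by
      have h' := congrArg Multiset.sum hdec
      rw [Multiset.sum_add, Multiset.sum_replicate, smul_eq_mul, mul_one, hsum] at h'
      exact h'
    have h2s : 2 * ((F.map (fun x => x / 2)).sum) = F.sum :=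
      two_mul_sum_map_div F hFdvd
    rw [Finset.mem_sigma]
    dsimp only
    constructor
    · rw [Finset.mem_filter, Finset.mem_range]
      omega
    · refine mem_BM.2 ⟨by omega, ?_, ?_⟩
      · intro p hp
        obtain ⟨x, hx, rfl⟩ := Multiset.mem_map.1 hp
        have := hFdvd x hx
        have := (Multiset.mem_filter.1 hx).2
        have := hpos x (Multiset.mem_filter.1 hx).1
        omega
      · intro p hp
        obtain ⟨x, hx, rfl⟩ := Multiset.mem_map.1 hp
        obtain ⟨hxM, hx1⟩ := Multiset.mem_filter.1 hx
        obtain ⟨i, rfl⟩ := hbin x hxM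
        cases i with
        | zero => simp at hx1
        | succ i => exact ⟨i, by rw [pow_succ]; omega⟩
  · -- left inverse : unglue (glue p) = p
    rintro ⟨m, N⟩ hp
    obtain ⟨hm, hN⟩ := Finset.mem_sigma.1 hp
    obtain ⟨hsum, hpos, hbin⟩ := mem_BM.1 hN
    dsimp only at *
    have hc : Multiset.count 1 (Multiset.replicate m 1 + N.map (fun x => 2 * x)) = m := by
      rw [Multiset.count_add, Multiset.count_replicate, if_pos rfl,
        Multiset.count_eq_zero.2 (by
          intro hmem
          obtain ⟨x, hx, hx2⟩ := Multiset.mem_map.1 hmem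
          omega)]
      omega
    have hfil : (Multiset.replicate m 1 + N.map (fun x => 2 * x)).filter (fun x => ¬ x = 1)
        = N.map (fun x => 2 * x) := by
      rw [Multiset.filter_add]
      rw [Multiset.filter_eq_nil.2 (by
        intro a ha
        rw [Multiset.eq_of_mem_replicate ha]
        simp), zero_add]
      refine Multiset.filter_eq_self.2 ?_
      intro a ha
      obtain ⟨x, hx, rfl⟩ := Multiset.mem_map.1 ha
      have := hpos x hx
      omega
    refine Sigma.ext hc (heq_of_eq ?_)
    rw [hfil, Multiset.map_map]
    refine (Multiset.map_congr rfl fun x _ => ?_).trans (Multiset.map_id _)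
    simp only [Function.comp, id]
    omega
  · -- right inverse : glue (unglue M) = M
    rintro M hM
    obtain ⟨hsum, hpos, hbin⟩ := mem_BM.1 hM
    have hFdvd : ∀ x ∈ M.filter (fun x => ¬ x = 1), 2 ∣ x := by
      intro x hx
      obtain ⟨hxM, hx1⟩ := Multiset.mem_filter.1 hx
      obtain ⟨i, rfl⟩ := hbin x hxM
      cases i with
      | zero => simp at hx1
      | succ i => exact ⟨2 ^ i, by rw [pow_succ]; ring⟩
    have : ((M.filter (fun x => ¬ x = 1)).map (fun x => x / 2)).map (fun x => 2 * x)
        = M.filter (fun x => ¬ x = 1) := by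
      rw [Multiset.map_map]
      refine (Multiset.map_congr rfl fun x hx => ?_).trans (Multiset.map_id _)
      exact Nat.mul_div_cancel' (hFdvd x hx)
    dsimp only
    rw [this]
    exact decomp M
  · -- weights agree
    rintro ⟨m, N⟩ hp
    obtain ⟨hm, hN⟩ := Finset.mem_sigma.1 hp
    obtain ⟨hsum, hpos, hbin⟩ := mem_BM.1 hN
    dsimp only at *
    exact (wt_glue h s m N hpos).symm

end TGAux6

namespace TGAux7
open Finset TGAux TGAux2 TGAux3 TGAux4 TGAux5 TGAux6

lemma rfun_eq_sum (n : ℕ) : ∀ h s, rfun 2 h n s = ∑ M ∈ BM n, wt h s M := by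
  induction n using Nat.strong_induction_on with
  | _ n IH =>
    intro h s
    rcases Nat.eq_zero_or_pos n with rfl | hn
    · rw [rfun, dif_pos rfl]
      have hBM : BM 0 = {(0 : Multiset ℕ)} := by
        ext M
        rw [mem_BM, Finset.mem_singleton]
        constructor
        · rintro ⟨h1, h2, h3⟩
          rw [Multiset.eq_zero_iff_forall_notMem]
          intro a ha
          have h4 := h2 a ha
          have h5 := Multiset.single_le_sum (fun x _ => Nat.zero_le x) a ha
          omega
        · rintro rfl
          exact ⟨rfl, by simp, by simp⟩
      rw [hBM, Finset.sum_singleton, wt]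
      simp [partZ, wNum]
    · rw [rfun, dif_neg (by omega)]
      rw [← key n h s]
      apply Finset.sum_congr rfl
      intro m hm
      rw [Finset.mem_filter, Finset.mem_range] at hm
      rw [IH ((n - m) / 2) (by omega), Finset.mul_sum]

lemma wNum_zero_eq (L : List ℕ) : ∀ s : ℕ, wNum 0 s L =
    ∏ j ∈ Finset.range L.length,
      (2 * ((s : ℚ) + (((L.take (j + 1)).sum : ℕ) : ℚ)) - 1) ^ 2 := by
  induction L with
  | nil => intro s; simp [wNum]
  | cons a l ih =>
    intro s
    rw [wNum, ih, List.length_cons, Finset.prod_range_succ', mul_comm]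
    congr 1
    · apply Finset.prod_congr rfl
      intro j hj
      rw [List.take_succ_cons, List.sum_cons]
      push_cast
      ring_nf
    · rw [List.take_succ_cons, List.take_zero, List.sum_cons, List.sum_nil]
      push_cast
      ring_nf

end TGAux7

namespace TGAux8
open Finset TGAux TGAux2 TGAux3 TGAux4 TGAux5 TGAux6 TGAux7

lemma take_sum_pos (L : List ℕ) (hpos : ∀ x ∈ L, 0 < x) (j : ℕ) (hj : j + 1 ≤ L.length) :
    1 ≤ (L.take (j + 1)).sum := by
  set T := L.take (j + 1) with hT
  have hTne : T ≠ [] := by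
    rw [hT, ← List.length_pos_iff]
    rw [List.length_take]
    omega
  obtain ⟨x, hx⟩ := List.exists_mem_of_ne_nil T hTne
  have hxL : x ∈ L := List.take_subset _ _ hx
  have h1 := hpos x hxL
  have h2 : x ≤ T.sum := by
    have := Multiset.single_le_sum (s := (T : Multiset ℕ)) (fun y _ => Nat.zero_le y) x
      (by simpa using hx)
    simpa using this
  omega

lemma wNum_eq_partP (n : ℕ) (M : Multiset ℕ) (hpos : ∀ x ∈ M, 0 < x) (hsum : M.sum = n)
    (hn : 1 ≤ n) :
    wNum 0 0 (M.sort (· ≤ ·)) = (partP 2 M : ℚ) * (2 * (n : ℚ) - 1) ^ 2 := by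
  set L := M.sort (· ≤ ·) with hL
  have hposL : ∀ x ∈ L, 0 < x := fun x hx => hpos x ((Multiset.mem_sort _).1 hx)
  have hLsum : L.sum = n := by
    have : (L : Multiset ℕ).sum = M.sum := by rw [hL, Multiset.sort_eq]
    simpa [hsum] using this
  have hlen : L.length ≠ 0 := by
    intro h0
    rw [List.length_eq_zero_iff] at h0
    rw [h0] at hLsum
    simp at hLsum
    omega
  obtain ⟨ℓ, hℓ⟩ : ∃ ℓ, L.length = ℓ + 1 := ⟨L.length - 1, by omega⟩
  rw [wNum_zero_eq, hℓ, Finset.prod_range_succ]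
  have hlast : (L.take (ℓ + 1)).sum = n := by
    rw [← hℓ, List.take_length, hLsum]
  have hcast : (partP 2 M : ℚ)
      = ∏ j ∈ Finset.range ℓ, (2 * ((0 : ℚ) + (((L.take (j + 1)).sum : ℕ) : ℚ)) - 1) ^ 2 := by
    rw [partP, ← hL, hℓ]
    simp only [Nat.add_sub_cancel]
    rw [Nat.cast_prod]
    apply Finset.prod_congr rfl
    intro j hj
    rw [Finset.mem_range] at hj
    have h1 : 1 ≤ (L.take (j + 1)).sum := take_sum_pos L hposL j (by omega)
    have h2 : ((2 * (L.take (j + 1)).sum - 1 : ℕ) : ℚ)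
        = 2 * (((L.take (j + 1)).sum : ℕ) : ℚ) - 1 := by
      push_cast [Nat.cast_sub (by omega : 1 ≤ 2 * (L.take (j + 1)).sum)]
      ring
    rw [Nat.cast_pow, h2]
    ring
  rw [hcast, hlast]
  push_cast
  ring

end TGAux8

open TGAux TGAux2 TGAux3 TGAux4 TGAux5 TGAux6 TGAux7 TGAux8

/-- **Lemma 11**: for `n ≥ 1`, the number of tanglegrams of size `n`, i.e.
`Σ_λ P_2(λ)/z_λ` over binary partitions `λ` of `n`, equals `r(0, n, 0)/f²(n)` with
`f²(s) = (2s-1)²`. -/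
theorem tanglegram_count_recurrence (n : ℕ) (hn : 1 ≤ n) :
    binPartSum 2 n = rfun 2 0 n 0 / (2 * (n : ℚ) - 1) ^ 2 := by
  classical
  have hfin : binPartSum 2 n
      = ∑ μ ∈ binFinset n, (partP 2 μ.parts : ℚ) / (partZ μ.parts : ℚ) := by
    rw [binPartSum]
    apply finsum_cond_eq_sum_of_cond_iff
    intro x _
    rw [binFinset, Finset.mem_filter]
    simp
  rw [hfin, sum_binFinset n (fun M => (partP 2 M : ℚ) / (partZ M : ℚ)),
    rfun_eq_sum n 0 0, Finset.sum_div]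
  apply Finset.sum_congr rfl
  intro M hM
  obtain ⟨hsum, hpos, hbin⟩ := mem_BM.1 hM
  have hone : (1 : ℚ) ≤ (n : ℚ) := by exact_mod_cast hn
  have hf : (2 * (n : ℚ) - 1) ^ 2 ≠ 0 := pow_ne_zero 2 (by linarith)
  have hz : (partZ M : ℚ) ≠ 0 := Nat.cast_ne_zero.2 (partZ_pos M hpos).ne'
  rw [wt, wNum_eq_partP n M hpos hsum hn]
  rw [Nat.zero_mul, pow_zero, one_mul]
  have hf1 : (2 * (n : ℚ) - 1) ≠ 0 := by linarith
  field_simp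
end

section
/- For every k ≥ 1 and n ≥ 1, Σ_λ P_k(λ)/z_λ (sum over binary partitions λ of n) equals r^k(0, n, 0)/(2n−1)^k, where r^k is the recursively defined function given in the context. (Equivalently, the number of tangled chains of length k and size n is r^k(0,n,0)/f^k(n) with f^k(s) = (2s−1)^k.) -/
lemma partZ_def' (M : Multiset ℕ) :
    partZ M = M.prod * ∏ i ∈ M.toFinset, (M.count i).factorial := by
  rfl

lemma partZ_zero : partZ 0 = 1 := by simp [partZ]

lemma partZ_cons (a : ℕ) (M : Multiset ℕ) :
    partZ (a ::ₘ M) = a * (M.count a + 1) * partZ M := by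
  rw [partZ_def', partZ_def', Multiset.prod_cons]
  rw [Multiset.toFinset_cons]
  by_cases hmem : a ∈ M.toFinset
  · rw [Finset.insert_eq_self.2 hmem]
    rw [← Finset.prod_erase_mul _ _ hmem, ← Finset.prod_erase_mul _ _ hmem]
    have h1 : ∀ i ∈ M.toFinset.erase a, ((a ::ₘ M).count i).factorial = (M.count i).factorial := by
      intro i hi
      rw [Multiset.count_cons_of_ne (Finset.ne_of_mem_erase hi)]
    rw [Finset.prod_congr rfl h1, Multiset.count_cons_self]
    rw [Nat.factorial_succ]
    ring
  · have hz : M.count a = 0 := by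
      simpa [Multiset.count_eq_zero] using fun h => hmem (Multiset.mem_toFinset.2 h)
    rw [Finset.prod_insert hmem]
    have h1 : ∀ i ∈ M.toFinset, ((a ::ₘ M).count i).factorial = (M.count i).factorial := by
      intro i hi
      rw [Multiset.count_cons_of_ne]
      rintro rfl; exact hmem hi
    rw [Finset.prod_congr rfl h1, Multiset.count_cons_self, hz]
    simp [Nat.factorial]
    ring

lemma partZ_pos_s10 (M : Multiset ℕ) (hM : ∀ p ∈ M, 0 < p) : 0 < partZ M := by
  induction M using Multiset.induction with
  | empty => simp [partZ_zero]
  | cons a M ih =>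
    rw [partZ_cons]
    have := hM a (Multiset.mem_cons_self a M)
    have := ih (fun p hp => hM p (Multiset.mem_cons_of_mem hp))
    positivity

lemma partZ_replicate_one_add (m : ℕ) (M : Multiset ℕ) (h1 : 1 ∉ M) :
    partZ (Multiset.replicate m 1 + M) = m.factorial * partZ M := by
  induction m with
  | zero => simp
  | succ m ih =>
    rw [Multiset.replicate_succ, Multiset.cons_add, partZ_cons, ih]
    have hc : (Multiset.replicate m 1 + M).count 1 = m := by
      rw [Multiset.count_add, Multiset.count_replicate]
      simp [Multiset.count_eq_zero.2 h1]
    rw [hc, Nat.factorial_succ]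
    ring

lemma partZ_map_double (M : Multiset ℕ) :
    partZ (M.map (fun x => 2 * x)) = 2 ^ Multiset.card M * partZ M := by
  induction M using Multiset.induction with
  | empty => simp [partZ_zero]
  | cons a M ih =>
    rw [Multiset.map_cons, partZ_cons, partZ_cons, ih,
      Multiset.count_map_eq_count' _ _ (fun x y h => by omega) a]
    simp [pow_succ]
    ring

lemma cfun_eq (k h m s : ℕ) :
    cfun k h m s = (∏ j ∈ Finset.range m, (2 * ((s : ℚ) + ((j : ℚ) + 1) * 2 ^ h) - 1) ^ k) /
      (((2 : ℚ) ^ h) ^ m * (m.factorial : ℚ)) := by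
  induction m with
  | zero => simp [cfun]
  | succ m ih =>
    rw [cfun, Finset.prod_Icc_succ_top (by omega), ← cfun, ih, Finset.prod_range_succ]
    have h2 : (2 : ℚ) ^ h ≠ 0 := by positivity
    have hf : (m.factorial : ℚ) ≠ 0 := by exact_mod_cast m.factorial_ne_zero
    have hm1 : ((m : ℚ) + 1) ≠ 0 := by positivity
    rw [div_mul_div_comm]
    congr 1
    · push_cast; ring
    · rw [pow_succ, Nat.factorial_succ]; push_cast; ring

open Classical in

noncomputable def binParts (n : ℕ) : Finset (Multiset ℕ) :=
  Finset.image Nat.Partition.parts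
    (Finset.univ.filter fun mu : n.Partition => ∀ p ∈ mu.parts, ∃ i : ℕ, p = 2 ^ i)

lemma mem_binParts {n : ℕ} {M : Multiset ℕ} :
    M ∈ binParts n ↔ M.sum = n ∧ ∀ p ∈ M, ∃ i : ℕ, p = 2 ^ i := by
  constructor
  · rintro hM
    simp only [binParts, Finset.mem_image, Finset.mem_filter] at hM
    obtain ⟨mu, ⟨-, h2⟩, rfl⟩ := hM
    exact ⟨mu.parts_sum, h2⟩
  · rintro ⟨h1, h2⟩
    have hpos : ∀ p ∈ M, 0 < p := by
      intro p hp; obtain ⟨i, rfl⟩ := h2 p hp; positivity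
    simp only [binParts, Finset.mem_image, Finset.mem_filter]
    exact ⟨⟨M, fun hp => hpos _ hp, h1⟩, ⟨Finset.mem_univ _, h2⟩, rfl⟩

lemma binParts_pos {n : ℕ} {M : Multiset ℕ} (hM : M ∈ binParts n) : ∀ p ∈ M, 0 < p := by
  intro p hp
  obtain ⟨i, rfl⟩ := (mem_binParts.1 hM).2 p hp
  positivity

lemma binParts_zero : binParts 0 = {0} := by
  ext M
  rw [mem_binParts, Finset.mem_singleton]
  constructor
  · rintro ⟨h1, h2⟩
    rw [Multiset.eq_zero_iff_forall_notMem]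
    intro p hp
    obtain ⟨i, rfl⟩ := h2 p hp
    have := Multiset.single_le_sum (fun x _ => Nat.zero_le x) _ hp
    have : 0 < (2:ℕ)^i := by positivity
    omega
  · rintro rfl; simp

noncomputable def wgt (k h s : ℕ) (M : Multiset ℕ) : ℚ :=
  (∏ j ∈ Finset.range (M.sort (· ≤ ·)).length,
    (2 * ((s : ℚ) + (2 : ℚ) ^ h * (((M.sort (· ≤ ·)).take (j + 1)).sum : ℕ)) - 1) ^ k) /
  (((2 : ℚ) ^ h) ^ Multiset.card M * (partZ M : ℚ))

lemma wgt_zero (k h s : ℕ) : wgt k h s 0 = 1 := by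
  simp [wgt, partZ_zero]

lemma sort_replicate_add (m : ℕ) (M' : Multiset ℕ) (hpos : ∀ p ∈ M', 0 < p) :
    (Multiset.replicate m 1 + M'.map (fun x => 2 * x)).sort (· ≤ ·) =
      List.replicate m 1 ++ (M'.sort (· ≤ ·)).map (fun x => 2 * x) := by
  apply fun hp hs1 hs2 => @List.Perm.eq_of_pairwise' ℕ (· ≤ ·) _ _ _ hs1 hs2 hp
  · rw [← Multiset.coe_eq_coe, Multiset.sort_eq]
    rw [← Multiset.coe_add, ← Multiset.map_coe, Multiset.sort_eq, Multiset.coe_replicate]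
  · exact Multiset.pairwise_sort _ _
  · rw [List.pairwise_append]
    refine ⟨?_, ?_, ?_⟩
    · exact List.pairwise_replicate.2 (Or.inr le_rfl)
    · exact List.Pairwise.map _ (fun a b h => by omega) (Multiset.pairwise_sort _ _)
    · intro x hx y hy
      rw [List.eq_of_mem_replicate hx]
      obtain ⟨b, hb, rfl⟩ := List.mem_map.1 hy
      have : 0 < b := hpos b (by rwa [← Multiset.mem_sort (· ≤ ·)])
      omega

lemma one_not_mem_double (M' : Multiset ℕ) : (1 : ℕ) ∉ M'.map (fun x => 2 * x) := by
  simp only [Multiset.mem_map, not_exists]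
  intro x ⟨_, h⟩
  omega

lemma wgt_rec (k h s m : ℕ) (M' : Multiset ℕ) (hpos : ∀ p ∈ M', 0 < p) :
    wgt k h s (Multiset.replicate m 1 + M'.map (fun x => 2 * x)) =
      cfun k h m s * wgt k (h + 1) (s + m * 2 ^ h) M' := by
  classical
  set L' := M'.sort (· ≤ ·) with hL'
  have hsort := sort_replicate_add m M' hpos
  rw [← hL'] at hsort
  have hlenL' : L'.length = Multiset.card M' := Multiset.length_sort _
  set ℓ := Multiset.card M' with hℓ
  have hcard : Multiset.card (Multiset.replicate m 1 + M'.map (fun x => 2 * x)) = m + ℓ := by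
    simp [hℓ]
  have hlen : ((Multiset.replicate m 1 + M'.map (fun x => 2 * x)).sort (· ≤ ·)).length = m + ℓ := by
    rw [Multiset.length_sort, hcard]
  -- partZ computation
  have hZ : (partZ (Multiset.replicate m 1 + M'.map (fun x => 2 * x)) : ℚ) =
      (m.factorial : ℚ) * 2 ^ ℓ * (partZ M' : ℚ) := by
    rw [partZ_replicate_one_add _ _ (one_not_mem_double M'), partZ_map_double]
    push_cast
    ring
  -- prefix sums, first block
  have htake1 : ∀ j, j < m →
      ((((Multiset.replicate m 1 + M'.map (fun x => 2 * x)).sort (· ≤ ·)).take (j + 1)).sum = j + 1) := by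
    intro j hj
    rw [hsort, List.take_append, List.take_replicate,
      min_eq_left (by omega : j + 1 ≤ m), List.length_replicate,
      (by omega : j + 1 - m = 0), List.take_zero, List.append_nil, List.sum_replicate]
    simp
  -- prefix sums, second block
  have htake2 : ∀ t, t < ℓ →
      ((((Multiset.replicate m 1 + M'.map (fun x => 2 * x)).sort (· ≤ ·)).take (m + t + 1)).sum
        = m + 2 * ((L'.take (t + 1)).sum)) := by
    intro t ht
    rw [hsort, List.take_append, List.take_replicate,
      min_eq_right (by omega : m ≤ m + t + 1), List.length_replicate,
      (by omega : m + t + 1 - m = t + 1), List.sum_append, List.sum_replicate,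
      ← List.map_take]
    have : ((L'.take (t + 1)).map (fun x => 2 * x)).sum = 2 * (L'.take (t + 1)).sum := by
      simpa using List.sum_map_mul_left (L'.take (t + 1)) (fun x => x) 2
    rw [this]
    simp
  -- now unfold wgt
  rw [wgt, wgt, cfun_eq, hlen, hcard, hZ]
  rw [Finset.prod_range_add]
  have e1 : ∀ j ∈ Finset.range m,
      (2 * ((s : ℚ) + (2:ℚ) ^ h * ((((Multiset.replicate m 1 + M'.map (fun x => 2 * x)).sort (· ≤ ·)).take (j + 1)).sum : ℕ)) - 1) ^ k
        = (2 * ((s : ℚ) + ((j : ℚ) + 1) * 2 ^ h) - 1) ^ k := by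
    intro j hj
    rw [htake1 j (Finset.mem_range.1 hj)]
    push_cast
    ring
  have e2 : ∀ t ∈ Finset.range ℓ,
      (2 * ((s : ℚ) + (2:ℚ) ^ h * ((((Multiset.replicate m 1 + M'.map (fun x => 2 * x)).sort (· ≤ ·)).take (m + t + 1)).sum : ℕ)) - 1) ^ k
        = (2 * (((s + m * 2 ^ h : ℕ) : ℚ) + (2:ℚ) ^ (h + 1) * (((M'.sort (· ≤ ·)).take (t + 1)).sum : ℕ)) - 1) ^ k := by
    intro t ht
    rw [htake2 t (Finset.mem_range.1 ht)]
    rw [← hL']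
    push_cast
    ring
  rw [Finset.prod_congr rfl e1, Finset.prod_congr rfl e2]
  rw [Multiset.length_sort, ← hℓ]
  have hZ' : (0:ℚ) < (partZ M' : ℚ) := by exact_mod_cast partZ_pos_s10 M' hpos
  have h2h : ((2:ℚ) ^ h) ≠ 0 := by positivity
  have hf : (m.factorial : ℚ) ≠ 0 := by exact_mod_cast m.factorial_ne_zero
  rw [div_mul_div_comm]
  congr 1
  rw [pow_add]
  push_cast
  ring

lemma double_mem_binParts {n' : ℕ} {M' : Multiset ℕ} (hM' : M' ∈ binParts n') (m : ℕ) :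
    Multiset.replicate m 1 + M'.map (fun x => 2 * x) ∈ binParts (m + 2 * n') := by
  obtain ⟨hsum, hpow⟩ := mem_binParts.1 hM'
  rw [mem_binParts]
  constructor
  · rw [Multiset.sum_add, Multiset.sum_replicate]
    have : (M'.map (fun x => 2 * x)).sum = 2 * M'.sum := by
      simpa using Multiset.sum_map_mul_left (s := M') (a := (2:ℕ)) (f := fun x => x)
    rw [this, hsum]
    simp [mul_comm]
  · intro p hp
    rcases Multiset.mem_add.1 hp with h | h
    · rw [Multiset.eq_of_mem_replicate h]
      exact ⟨0, rfl⟩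
    · obtain ⟨x, hx, rfl⟩ := Multiset.mem_map.1 h
      obtain ⟨i, rfl⟩ := hpow x hx
      exact ⟨i + 1, by rw [pow_succ']⟩

lemma decompose {n : ℕ} {M : Multiset ℕ} (hM : M ∈ binParts n) :
    Multiset.replicate (M.count 1) 1 +
      ((M.filter (· ≠ 1)).map (fun x => x / 2)).map (fun x => 2 * x) = M ∧
    n = M.count 1 + 2 * ((M.filter (· ≠ 1)).map (fun x => x / 2)).sum ∧
    ((M.filter (· ≠ 1)).map (fun x => x / 2)) ∈
      binParts (((M.filter (· ≠ 1)).map (fun x => x / 2)).sum) := by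
  classical
  obtain ⟨hsum, hpow⟩ := mem_binParts.1 hM
  have heven : ∀ p ∈ M.filter (· ≠ 1), 2 * (p / 2) = p := by
    intro p hp
    obtain ⟨hpM, hp1⟩ := Multiset.mem_filter.1 hp
    obtain ⟨i, rfl⟩ := hpow p hpM
    have hi : i ≠ 0 := by rintro rfl; simp at hp1
    obtain ⟨i', rfl⟩ := Nat.exists_eq_succ_of_ne_zero hi
    rw [pow_succ']
    omega
  have ha : Multiset.replicate (M.count 1) 1 +
      ((M.filter (· ≠ 1)).map (fun x => x / 2)).map (fun x => 2 * x) = M := by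
    rw [Multiset.map_map]
    have : ((M.filter (· ≠ 1)).map ((fun x => 2 * x) ∘ fun x => x / 2)) = M.filter (· ≠ 1) := by
      rw [show ((fun x => 2 * x) ∘ fun x => x / 2) = fun p => 2 * (p / 2) from rfl]
      calc (M.filter (· ≠ 1)).map (fun p => 2 * (p / 2))
          = (M.filter (· ≠ 1)).map id := Multiset.map_congr rfl heven
        _ = M.filter (· ≠ 1) := Multiset.map_id _
    rw [this, ← Multiset.filter_eq' M 1]
    have := Multiset.filter_add_not (fun x => x = 1) M
    simpa using this
  have hsum2 : n = M.count 1 + 2 * ((M.filter (· ≠ 1)).map (fun x => x / 2)).sum := by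
    conv_lhs => rw [← hsum, ← ha]
    rw [Multiset.sum_add, Multiset.sum_replicate]
    have : (((M.filter (· ≠ 1)).map (fun x => x / 2)).map (fun x => 2 * x)).sum
        = 2 * ((M.filter (· ≠ 1)).map (fun x => x / 2)).sum := by
      simpa using Multiset.sum_map_mul_left (s := (M.filter (· ≠ 1)).map (fun x => x / 2))
        (a := (2:ℕ)) (f := fun x => x)
    rw [this]
    simp
  refine ⟨ha, hsum2, ?_⟩
  rw [mem_binParts]
  refine ⟨rfl, ?_⟩
  intro p hp
  obtain ⟨q, hq, rfl⟩ := Multiset.mem_map.1 hp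
  obtain ⟨hqM, hq1⟩ := Multiset.mem_filter.1 hq
  obtain ⟨i, rfl⟩ := hpow q hqM
  have hi : i ≠ 0 := by rintro rfl; simp at hq1
  obtain ⟨i', rfl⟩ := Nat.exists_eq_succ_of_ne_zero hi
  exact ⟨i', by rw [pow_succ']; omega⟩

lemma rfun_eq_sum (k : ℕ) : ∀ n h s, rfun k h n s = ∑ M ∈ binParts n, wgt k h s M := by
  intro n
  induction n using Nat.strong_induction_on with
  | _ n IH =>
  intro h s
  rcases Nat.eq_zero_or_pos n with rfl | hn
  · rw [rfun, binParts_zero]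
    simp [wgt_zero]
  · rw [rfun, dif_neg (by omega : n ≠ 0)]
    have hIH : ∀ m ∈ (Finset.range (n + 1)).filter (fun m => (n - m) % 2 = 0),
        cfun k h m s * rfun k (h + 1) ((n - m) / 2) (s + m * 2 ^ h) =
        ∑ M' ∈ binParts ((n - m) / 2), cfun k h m s * wgt k (h + 1) (s + m * 2 ^ h) M' := by
      intro m hm
      rw [IH ((n - m) / 2) (by omega), Finset.mul_sum]
    rw [Finset.sum_congr rfl hIH, Finset.sum_sigma']
    symm
    refine Finset.sum_bij'
      (i := fun M (_ : M ∈ binParts n) => (⟨M.count 1, (M.filter (· ≠ 1)).map (fun x => x / 2)⟩ :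
        Σ _ : ℕ, Multiset ℕ))
      (j := fun p _ => Multiset.replicate p.1 1 + p.2.map (fun x => 2 * x)) ?hi ?hj ?ji ?ij ?val
    case hi =>
      intro M hM
      obtain ⟨ha, hs2, hbp⟩ := decompose hM
      rw [Finset.mem_sigma, Finset.mem_filter, Finset.mem_range]
      dsimp only
      refine ⟨⟨by omega, by omega⟩, ?_⟩
      have : (n - M.count 1) / 2 = ((M.filter (· ≠ 1)).map (fun x => x / 2)).sum := by omega
      rw [this]
      exact hbp
    case hj =>
      rintro ⟨m, M'⟩ hp
      rw [Finset.mem_sigma, Finset.mem_filter, Finset.mem_range] at hp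
      dsimp only at *
      obtain ⟨⟨hm1, hm2⟩, hM'⟩ := hp
      have := double_mem_binParts hM' m
      rwa [show m + 2 * ((n - m) / 2) = n by omega] at this
    case ji =>
      intro M hM
      exact (decompose hM).1
    case ij =>
      rintro ⟨m, M'⟩ hp
      rw [Finset.mem_sigma, Finset.mem_filter, Finset.mem_range] at hp
      dsimp only at *
      obtain ⟨⟨hm1, hm2⟩, hM'⟩ := hp
      have hc1 : (Multiset.replicate m 1 + M'.map (fun x => 2 * x)).count 1 = m := by
        rw [Multiset.count_add, Multiset.count_replicate]
        have : (M'.map (fun x => 2 * x)).count 1 = 0 := by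
          rw [Multiset.count_eq_zero]
          exact one_not_mem_double M'
        simp [this]
      have hc2 : ((Multiset.replicate m 1 + M'.map (fun x => 2 * x)).filter (· ≠ 1)).map
          (fun x => x / 2) = M' := by
        rw [Multiset.filter_add]
        have h1 : (Multiset.replicate m 1 : Multiset ℕ).filter (· ≠ 1) = 0 := by
          rw [Multiset.filter_eq_nil]
          intro a ha
          simp [Multiset.eq_of_mem_replicate ha]
        have h2 : (M'.map (fun x => 2 * x)).filter (· ≠ 1) = M'.map (fun x => 2 * x) := by
          rw [Multiset.filter_eq_self]
          intro a ha
          obtain ⟨x, _, rfl⟩ := Multiset.mem_map.1 ha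
          omega
        rw [h1, h2, zero_add, Multiset.map_map]
        calc M'.map ((fun x => x / 2) ∘ fun x => 2 * x)
            = M'.map id := Multiset.map_congr rfl (fun x _ => by simp)
          _ = M' := Multiset.map_id _
      simp only [hc1, hc2]
    case val =>
      intro M hM
      obtain ⟨ha, hs2, hbp⟩ := decompose hM
      conv_lhs => rw [← ha]
      exact wgt_rec k h s (M.count 1) _ (binParts_pos hbp)

lemma binPartSum_eq (k n : ℕ) :
    binPartSum k n = ∑ M ∈ binParts n, (partP k M : ℚ) / (partZ M : ℚ) := by
  classical
  rw [binPartSum, finsum_eq_sum_of_fintype]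
  simp only [finsum_eq_if]
  rw [← Finset.sum_filter]
  rw [show binParts n = Finset.image Nat.Partition.parts
    (Finset.univ.filter fun mu : n.Partition => ∀ p ∈ mu.parts, ∃ i : ℕ, p = 2 ^ i) from by
      rw [binParts]]
  rw [Finset.sum_image (fun mu _ mu' _ hpp => Nat.Partition.ext hpp)]

lemma wgt_top (k n : ℕ) (hn : 1 ≤ n) (M : Multiset ℕ) (hM : M ∈ binParts n) :
    wgt k 0 0 M = (partP k M : ℚ) / (partZ M : ℚ) * (2 * (n : ℚ) - 1) ^ k := by
  have hsum := (mem_binParts.1 hM).1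
  have hpos := binParts_pos hM
  have hMne : M ≠ 0 := by rintro rfl; simp at hsum; omega
  have hcard : 1 ≤ Multiset.card M := Multiset.card_pos.2 hMne
  have hlen : (M.sort (· ≤ ·)).length = Multiset.card M := Multiset.length_sort _
  have hLsum : (M.sort (· ≤ ·)).sum = n := by
    have h1 : ((M.sort (· ≤ ·) : List ℕ) : Multiset ℕ).sum = M.sum := by
      rw [Multiset.sort_eq]
    rw [Multiset.sum_coe] at h1
    rw [h1, hsum]
  have hS : ∀ j, j < (M.sort (· ≤ ·)).length - 1 →
      1 ≤ ((M.sort (· ≤ ·)).take (j + 1)).sum := by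
    intro j hj
    have hne : (M.sort (· ≤ ·)).take (j + 1) ≠ [] := by
      have hs0 : (M.sort (· ≤ ·)) ≠ [] := by
        intro h0
        rw [h0] at hlen
        simp at hlen
        omega
      rw [Ne, List.take_eq_nil_iff]
      push_neg
      exact ⟨by omega, hs0⟩
    have := List.sum_pos ((M.sort (· ≤ ·)).take (j + 1)) ?_ hne
    · omega
    · intro x hx
      exact hpos x (by
        have := List.mem_of_mem_take hx
        rwa [Multiset.mem_sort] at this)
  rw [wgt]
  rw [show (M.sort (· ≤ ·)).length = ((M.sort (· ≤ ·)).length - 1) + 1 from by omega,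
    Finset.prod_range_succ]
  rw [show ((M.sort (· ≤ ·)).length - 1) + 1 = (M.sort (· ≤ ·)).length from by omega,
    List.take_length, hLsum]
  have hcast : (partP k M : ℚ) = ∏ j ∈ Finset.range ((M.sort (· ≤ ·)).length - 1),
      (2 * ((((M.sort (· ≤ ·)).take (j + 1)).sum : ℕ) : ℚ) - 1) ^ k := by
    rw [partP, Nat.cast_prod]
    refine Finset.prod_congr rfl fun j hj => ?_
    have h1 := hS j (Finset.mem_range.1 hj)
    rw [Nat.cast_pow, Nat.cast_sub (by omega : 1 ≤ 2 * ((M.sort (· ≤ ·)).take (j + 1)).sum),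
      Nat.cast_mul, Nat.cast_one, Nat.cast_ofNat]
  rw [hcast]
  simp only [pow_zero, one_pow, one_mul, zero_add, Nat.cast_zero]
  rw [mul_div_right_comm]

/-- **Corollary 12**: for `k ≥ 1` and `n ≥ 1`, the number of tangled chains of length
`k` and size `n`, i.e. `Σ_λ P_k(λ)/z_λ` over binary partitions `λ` of `n`, equals
`r^k(0, n, 0)/f^k(n)` with `f^k(s) = (2s-1)^k`. -/
theorem tangled_chain_count_recurrence (k n : ℕ) (hk : 1 ≤ k) (hn : 1 ≤ n) :
    binPartSum k n = rfun k 0 n 0 / (2 * (n : ℚ) - 1) ^ k := by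
  rw [rfun_eq_sum k n 0 0, Finset.sum_congr rfl (wgt_top k n hn), ← Finset.sum_mul,
    ← binPartSum_eq]
  have hpos : (0:ℚ) < 2 * (n : ℚ) - 1 := by
    have : (1:ℚ) ≤ (n:ℚ) := by exact_mod_cast hn
    linarith
  rw [mul_div_assoc, div_self (by positivity), mul_one]
end

section
/- For every n ≥ 2, 2·(2n−3)!! = Σ_{k=1}^{n−1} binom(n, k)·(2k−3)!!·(2n−2k−3)!!, where the double factorial (2m−1)!! = 1·3·5⋯(2m−1) for m ≥ 1 and by convention (−1)!! = 1. -/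
open Finset Nat

lemma df_odd_succ (j : ℕ) :
    Nat.doubleFactorial (2 * (j + 1) - 1) =
      (2 * j + 1) * Nat.doubleFactorial (2 * j - 1) := by
  cases j with
  | zero => simp [Nat.doubleFactorial]
  | succ i =>
      have h1 : 2 * (i + 1 + 1) - 1 = (2 * (i + 1) - 1) + 2 := by omega
      have h2 : (2 * (i + 1) - 1) + 2 = 2 * (i + 1) + 1 := by omega
      rw [h1, Nat.doubleFactorial_add_two, h2]

lemma pow_mul_df (j : ℕ) :
    2 ^ j * Nat.doubleFactorial (2 * j - 1) = catalan j * (j + 1)! := by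
  -- first prove via centralBinom
  have key : ∀ j : ℕ, 2 ^ j * Nat.doubleFactorial (2 * j - 1) =
      Nat.centralBinom j * j ! := by
    intro j
    induction j with
    | zero => simp [Nat.centralBinom]
    | succ i ih =>
        have hc := Nat.succ_mul_centralBinom_succ i
        have hpos : 0 < i + 1 := Nat.succ_pos i
        apply Nat.eq_of_mul_eq_mul_left hpos
        calc (i + 1) * (2 ^ (i + 1) * Nat.doubleFactorial (2 * (i + 1) - 1))
            = (i + 1) * (2 ^ (i + 1) * ((2 * i + 1) * Nat.doubleFactorial (2 * i - 1))) := by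
              rw [df_odd_succ]
          _ = (2 * (2 * i + 1)) * (2 ^ i * Nat.doubleFactorial (2 * i - 1)) * (i + 1) := by
              ring
          _ = (2 * (2 * i + 1)) * (Nat.centralBinom i * i !) * (i + 1) := by rw [ih]
          _ = (2 * (2 * i + 1) * Nat.centralBinom i) * ((i + 1) * i !) := by ring
          _ = ((i + 1) * Nat.centralBinom (i + 1)) * ((i + 1) * i !) := by rw [hc]
          _ = (i + 1) * (Nat.centralBinom (i + 1) * (i + 1)!) := by
              rw [Nat.factorial_succ]; ring
    
  rw [key]
  have h := succ_mul_catalan_eq_centralBinom j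
  calc Nat.centralBinom j * j ! = ((j + 1) * catalan j) * j ! := by rw [h]
    _ = catalan j * ((j + 1) * j !) := by ring
    _ = catalan j * (j + 1)! := by rw [Nat.factorial_succ]

/-- For every `n ≥ 2`, `2·(2n-3)!! = Σ_{k=1}^{n-1} C(n,k)·(2k-3)!!·(2n-2k-3)!!`.
Here `(2m-1)!! = 1·3·5⋯(2m-1)` and, by convention, `(-1)!! = 1`; under truncated natural
subtraction `2·1 - 3 = 0` and `Nat.doubleFactorial 0 = 1`, which realizes exactly this
convention. -/
theorem doubleFactorial_catalan_recurrence (n : ℕ) (hn : 2 ≤ n) :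
    2 * Nat.doubleFactorial (2 * n - 3) =
      ∑ k ∈ Finset.Icc 1 (n - 1),
        n.choose k * Nat.doubleFactorial (2 * k - 3) *
          Nat.doubleFactorial (2 * n - 2 * k - 3) := by
  obtain ⟨m, rfl⟩ : ∃ m, n = m + 2 := ⟨n - 2, by omega⟩
  apply Nat.eq_of_mul_eq_mul_left (pow_pos (by norm_num : (0:ℕ) < 2) m)
  have hIcc : Finset.Icc 1 (m + 2 - 1) = Finset.map ⟨fun i => i + 1, add_left_injective 1⟩
      (Finset.range (m + 1)) := by
    ext x
    simp only [Finset.mem_Icc, Finset.mem_map, Finset.mem_range, Function.Embedding.coeFn_mk]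
    constructor
    · rintro ⟨h1, h2⟩; exact ⟨x - 1, by omega, by omega⟩
    · rintro ⟨i, hi, rfl⟩; omega
  rw [hIcc, Finset.sum_map, Finset.mul_sum]
  have lhs_eq : 2 ^ m * (2 * Nat.doubleFactorial (2 * (m + 2) - 3)) =
      catalan (m + 1) * (m + 2)! := by
    have h3 : 2 * (m + 2) - 3 = 2 * (m + 1) - 1 := by omega
    rw [h3, show (2 : ℕ) ^ m * (2 * Nat.doubleFactorial (2 * (m + 1) - 1)) =
      2 ^ (m + 1) * Nat.doubleFactorial (2 * (m + 1) - 1) by ring, pow_mul_df]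
  rw [lhs_eq]
  have term_eq : ∀ i ∈ Finset.range (m + 1),
      2 ^ m * ((m + 2).choose (i + 1) * Nat.doubleFactorial (2 * (i + 1) - 3) *
        Nat.doubleFactorial (2 * (m + 2) - 2 * (i + 1) - 3)) =
      (m + 2)! * (catalan i * catalan (m - i)) := by
    intro i hi
    rw [Finset.mem_range] at hi
    have hi' : i ≤ m := by omega
    have h1 : 2 * (i + 1) - 3 = 2 * i - 1 := by omega
    have h2 : 2 * (m + 2) - 2 * (i + 1) - 3 = 2 * (m - i) - 1 := by omega
    have h3 : (2 : ℕ) ^ m = 2 ^ i * 2 ^ (m - i) := by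
      rw [← pow_add]; congr 1; omega
    rw [h1, h2, h3]
    have hA := pow_mul_df i
    have hB := pow_mul_df (m - i)
    have hfact : (m + 2).choose (i + 1) * (i + 1)! * (m - i + 1)! = (m + 2)! := by
      have := Nat.choose_mul_factorial_mul_factorial (show i + 1 ≤ m + 2 by omega)
      have he : m + 2 - (i + 1) = m - i + 1 := by omega
      rwa [he] at this
    calc 2 ^ i * 2 ^ (m - i) * ((m + 2).choose (i + 1) * Nat.doubleFactorial (2 * i - 1) *
          Nat.doubleFactorial (2 * (m - i) - 1))
        = (m + 2).choose (i + 1) * (2 ^ i * Nat.doubleFactorial (2 * i - 1)) *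
          (2 ^ (m - i) * Nat.doubleFactorial (2 * (m - i) - 1)) := by ring
      _ = (m + 2).choose (i + 1) * (catalan i * (i + 1)!) *
          (catalan (m - i) * (m - i + 1)!) := by rw [hA, hB]
      _ = ((m + 2).choose (i + 1) * (i + 1)! * (m - i + 1)!) *
          (catalan i * catalan (m - i)) := by ring
      _ = (m + 2)! * (catalan i * catalan (m - i)) := by rw [hfact]
  simp only [Function.Embedding.coeFn_mk]
  rw [Finset.sum_congr rfl term_eq, ← Finset.mul_sum]
  have hcat : catalan (m + 1) = ∑ i ∈ Finset.range (m + 1),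
      catalan i * catalan (m - i) := by
    rw [catalan_succ]
    rw [← Fin.sum_univ_eq_sum_range (fun i => catalan i * catalan (m - i)) (m + 1)]
  rw [hcat]; ring
end
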